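/- arXiv:2502.18144 — 3 statements merged into one kernel-verified Lean document; each statement's English description precedes it below -/
import Mathlib

section
/- For n ≥ 2, let B_n be the arrangement in ℚ^n with coordinates x_0,…,x_{n−1} given by B_n = A_{P_n} ∪ {H_1,…,H_{n−1}}, where A_{P_n} is the connected subgraph arrangement of the path graph on the consecutively labelled vertices 0,1,…,n−1 and H_k = ker(2x_0 + x_1 + ⋯ + x_k) for k = 1,…,n−1. Then the partition π with blocks π_1 = {ker(x_0)} and π_k = {ker(x_j + ⋯ + x_{k−1}) : j} ∪ {H_{k−1}} for k = 2,…,n is an inductive factorization of B_n; in particular B_n is inductively free with exponents (1, 3, 4, …, n+1). -/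
open Submodule

/-! ## Basic definitions for hyperplane arrangements -/

/-- The linear form `∑_{i ∈ I} x_i` on `K^n`. -/
noncomputable def sumForm (n : ℕ) (K : Type*) [Field K] (I : Finset (Fin n)) :
    (Fin n → K) →ₗ[K] K :=
  ∑ i ∈ I, LinearMap.proj i

/-- The hyperplane `H_I = ker (∑_{i ∈ I} x_i)` in `K^n`. -/
noncomputable def hypI (n : ℕ) (K : Type*) [Field K] (I : Finset (Fin n)) :
    Submodule K (Fin n → K) :=
  LinearMap.ker (sumForm n K I)

/-- The nonempty vertex subsets of `G` inducing connected subgraphs. -/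
def connSets {n : ℕ} (G : SimpleGraph (Fin n)) : Set (Finset (Fin n)) :=
  {I | I.Nonempty ∧ (G.induce (I : Set (Fin n))).Connected}

/-- The connected subgraph arrangement `A_G(K)` in `K^n`. -/
noncomputable def connArr (K : Type*) [Field K] {n : ℕ} (G : SimpleGraph (Fin n)) :
    Set (Submodule K (Fin n → K)) :=
  (hypI n K) '' (connSets G)

/-- The intersection lattice of a central arrangement: all intersections of
subfamilies of `A` (with the empty intersection being the ambient space `⊤`). -/
def lat {K V : Type*} [Field K] [AddCommGroup V] [Module K V]
    (A : Set (Submodule K V)) : Set (Submodule K V) :=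
  {X | ∃ B ⊆ A, X = sInf B}

/-- A central arrangement: a finite set of hyperplanes (coatoms of the submodule
lattice) in `V`. -/
def IsCentralArr {K V : Type*} [Field K] [AddCommGroup V] [Module K V]
    (A : Set (Submodule K V)) : Prop :=
  A.Finite ∧ ∀ H ∈ A, IsCoatom H

/-- Two arrangements in `V` are linearly isomorphic. -/
def LinIsom {K V : Type*} [Field K] [AddCommGroup V] [Module K V]
    (A B : Set (Submodule K V)) : Prop :=
  ∃ φ : V ≃ₗ[K] V, B = (Submodule.map (φ : V →ₗ[K] V)) '' A

/-- Two arrangements are `L`-equivalent: their intersection lattices are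
isomorphic posets. -/
def LEquiv {K V W : Type*} [Field K] [AddCommGroup V] [Module K V]
    [AddCommGroup W] [Module K W]
    (A : Set (Submodule K V)) (B : Set (Submodule K W)) : Prop :=
  Nonempty (↥(lat A) ≃o ↥(lat B))

/-- An arrangement `A` in `V` is projectively unique if every central arrangement
in `V` that is `L`-equivalent to `A` is linearly isomorphic to `A`. -/
def ProjUnique {K V : Type*} [Field K] [AddCommGroup V] [Module K V]
    (A : Set (Submodule K V)) : Prop :=
  ∀ B : Set (Submodule K V), IsCentralArr B → LEquiv B A → LinIsom B A

/-- `Gen_i(A,S)`. -/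
def Gen {K V : Type*} [Field K] [AddCommGroup V] [Module K V]
    (A S : Set (Submodule K V)) : ℕ → Set (Submodule K V)
  | 0 => S
  | (i+1) => {H | H ∈ A ∧ ∃ J ⊆ lat (Gen A S i), H = sSup J}

/-- The subarrangement `⟨S⟩_A` of `A` generated by `S`. -/
def genSpan {K V : Type*} [Field K] [AddCommGroup V] [Module K V]
    (A S : Set (Submodule K V)) : Set (Submodule K V) :=
  ⋃ i, Gen A S i

/-- An arrangement is irreducible if it is not (linearly isomorphic to)
a nontrivial product of two lower-dimensional arrangements. -/
def IsIrredArr {K V : Type*} [Field K] [AddCommGroup V] [Module K V]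
    (A : Set (Submodule K V)) : Prop :=
  ¬ ∃ U W : Submodule K V, IsCompl U W ∧ U ≠ ⊥ ∧ W ≠ ⊥ ∧ ∀ H ∈ A, U ≤ H ∨ W ≤ H

/-! ## Freeness -/

/-- The linear form `f` as a degree one polynomial. -/
noncomputable def toPoly {n : ℕ} {K : Type*} [Field K] (f : (Fin n → K) →ₗ[K] K) :
    MvPolynomial (Fin n) K :=
  ∑ i, MvPolynomial.C (f (Pi.single i 1)) * MvPolynomial.X i

/-- The module `D(A)` of logarithmic derivations of an arrangement in `K^n`:
all `θ` with `θ(α_H) ∈ (α_H)` for every defining form `α_H` of every `H ∈ A`. -/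
noncomputable def logDer (K : Type*) [Field K] {n : ℕ}
    (A : Set (Submodule K (Fin n → K))) :
    Submodule (MvPolynomial (Fin n) K)
      (Derivation K (MvPolynomial (Fin n) K) (MvPolynomial (Fin n) K)) where
  carrier := {θ | ∀ H ∈ A, ∀ f : (Fin n → K) →ₗ[K] K, LinearMap.ker f = H →
      θ (toPoly f) ∈ Ideal.span {toPoly f}}
  add_mem' := by
    intro a b ha hb H hH f hf
    simpa using add_mem (ha H hH f hf) (hb H hH f hf)
  zero_mem' := by
    intro H hH f hf
    simp
  smul_mem' := by
    intro c θ hθ H hH f hf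
    simpa [smul_eq_mul] using Ideal.mul_mem_left _ c (hθ H hH f hf)

/-- An arrangement in `K^n` is free if its module of logarithmic derivations is
free over the polynomial ring. -/
def IsFreeArr (K : Type*) [Field K] {n : ℕ}
    (A : Set (Submodule K (Fin n → K))) : Prop :=
  Module.Free (MvPolynomial (Fin n) K) ↥(logDer K A)

/-- Freeness with a prescribed tuple of exponents: there is a basis of `D(A)`
consisting of homogeneous derivations of the given degrees. -/
def IsFreeExp (K : Type*) [Field K] {n : ℕ} (A : Set (Submodule K (Fin n → K)))
    (e : Fin n → ℕ) : Prop :=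
  ∃ b : Module.Basis (Fin n) (MvPolynomial (Fin n) K) ↥(logDer K A),
    ∀ i j, ((b i : Derivation K (MvPolynomial (Fin n) K) (MvPolynomial (Fin n) K))
      (MvPolynomial.X j)).IsHomogeneous (e i)

/-- The restriction `A^X` of an arrangement to a flat `X`, as an arrangement in `X`. -/
def restrictArr {K V : Type*} [Field K] [AddCommGroup V] [Module K V]
    (A : Set (Submodule K V)) (X : Submodule K V) : Set (Submodule K ↥X) :=
  {Y | ∃ H ∈ A, ¬ X ≤ H ∧ Y = Submodule.comap X.subtype H}

/-- Freeness with prescribed exponents for an arrangement in an abstract space: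
transport along a linear isomorphism with `K^d`. -/
def IsFreeExpOn {K W : Type*} [Field K] [AddCommGroup W] [Module K W]
    (A : Set (Submodule K W)) (d : ℕ) (e : Fin d → ℕ) : Prop :=
  ∃ φ : W ≃ₗ[K] (Fin d → K),
    IsFreeExp K ((Submodule.map (φ : W →ₗ[K] (Fin d → K))) '' A) e

/-- Accuracy: `A` is free with (sorted) exponents `e₁ ≤ … ≤ e_n` and for each
`1 ≤ d ≤ n` some flat `X ∈ L(A)` of dimension `d` has free restriction `A^X`
with exponents `(e₁, …, e_d)`. -/
def IsAccurate (K : Type*) [Field K] {n : ℕ}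
    (A : Set (Submodule K (Fin n → K))) : Prop :=
  ∃ e : Fin n → ℕ, Monotone e ∧ IsFreeExp K A e ∧
    ∀ d : ℕ, 1 ≤ d → ∀ (hdn : d ≤ n), ∃ X ∈ lat A, Module.finrank K ↥X = d ∧
      IsFreeExpOn (restrictArr A X) d (fun i => e ⟨i.1, lt_of_lt_of_le i.2 hdn⟩)

/-! ## Graphs -/

/-- The path graph on vertices `0, 1, …, n-1` (consecutive vertices adjacent). -/
def pathGraph' (n : ℕ) : SimpleGraph (Fin n) :=
  SimpleGraph.fromRel (fun a b => a.1 + 1 = b.1)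

/-- The almost-path graph `A_{n,k}` (vertices `1, …, n+1` of the paper are
`0, …, n` here): a path on `0, …, n-1` plus the vertex `n` joined to `k-1`. -/
def almostPathGraph (n k : ℕ) : SimpleGraph (Fin (n+1)) :=
  SimpleGraph.fromRel (fun a b => (a.1 + 1 = b.1 ∧ b.1 < n) ∨ (a.1 + 1 = k ∧ b.1 = n))

/-- The path-with-triangle graph `Δ_{n,k}` (vertices `1, …, n+1` of the paper are
`0, …, n` here): a path on `0, …, n-1` plus the vertex `n` joined to `k-1` and `k`. -/
def pathTriangleGraph (n k : ℕ) : SimpleGraph (Fin (n+1)) :=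
  SimpleGraph.fromRel (fun a b =>
    (a.1 + 1 = b.1 ∧ b.1 < n) ∨ ((a.1 + 1 = k ∨ a.1 = k) ∧ b.1 = n))

/-! ## Factored and inductively factored arrangements -/

/-- The localization `A_X`. -/
def locArr {K V : Type*} [Field K] [AddCommGroup V] [Module K V]
    (A : Set (Submodule K V)) (X : Submodule K V) : Set (Submodule K V) :=
  {H | H ∈ A ∧ X ≤ H}

/-- `P` is a partition of the set `A` (into nonempty blocks). -/
def IsPartitionOf {α : Type*} (A : Set α) (P : Set (Set α)) : Prop :=
  (∀ B ∈ P, B.Nonempty) ∧ (∀ B ∈ P, B ⊆ A) ∧ ∀ a ∈ A, ∃! B, B ∈ P ∧ a ∈ B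

/-- A partition of an arrangement is independent if any transversal choice of
hyperplanes, one from each block, is linearly independent (the codimension of the
intersection equals the number of blocks). -/
def IsIndepPartition {K V : Type*} [Field K] [AddCommGroup V] [Module K V]
    (P : Set (Set (Submodule K V))) : Prop :=
  ∀ f : Set (Submodule K V) → Submodule K V, (∀ B ∈ P, f B ∈ B) →
    Module.finrank K V = P.ncard + Module.finrank K ↥(⨅ B ∈ P, f B)

/-- A nice partition (factorization) of an arrangement. -/
def IsNicePartition {K V : Type*} [Field K] [AddCommGroup V] [Module K V]
    (A : Set (Submodule K V)) (P : Set (Set (Submodule K V))) : Prop :=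
  IsPartitionOf A P ∧ IsIndepPartition P ∧
    ∀ X ∈ lat A, X ≠ (⊤ : Submodule K V) →
      ∃ B ∈ P, ∃ H, B ∩ locArr A X = {H}

/-- An arrangement is factored (nice) if it admits a nice partition. -/
def IsFactored {K V : Type*} [Field K] [AddCommGroup V] [Module K V]
    (A : Set (Submodule K V)) : Prop :=
  ∃ P, IsNicePartition A P

/-- Inductively factored arrangements (in coordinate spaces `K^d`, restrictions
being transported to a coordinate space by a linear isomorphism). -/
inductive IndFactored (K : Type) [Field K] :
    (d : ℕ) → Set (Submodule K (Fin d → K)) → Set (Set (Submodule K (Fin d → K))) → Prop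
  | empty (d : ℕ) : IndFactored K d ∅ ∅
  | step (d : ℕ) (A : Set (Submodule K (Fin d → K)))
      (P : Set (Set (Submodule K (Fin d → K))))
      (B₁ : Set (Submodule K (Fin d → K))) (H₀ : Submodule K (Fin d → K))
      (e : ℕ) (φ : ↥H₀ ≃ₗ[K] (Fin e → K))
      (hB₁ : B₁ ∈ P) (hH₀B : H₀ ∈ B₁) (hH₀A : H₀ ∈ A)
      (hbij : Set.BijOn (fun H => Submodule.comap H₀.subtype H) (A \ B₁)
        ((fun H => Submodule.comap H₀.subtype H) '' (A \ {H₀})))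
      (hdel : IndFactored K d (A \ {H₀})
        {C | ∃ B ∈ P, C = B ∩ (A \ {H₀}) ∧ C.Nonempty})
      (hres : IndFactored K e
        ((fun Y => Submodule.map (φ : ↥H₀ →ₗ[K] (Fin e → K)) Y) ''
          ((fun H => Submodule.comap H₀.subtype H) '' (A \ {H₀})))
        {C | ∃ B ∈ P, B ≠ B₁ ∧
          C = (fun Y => Submodule.map (φ : ↥H₀ →ₗ[K] (Fin e → K)) Y) ''
            ((fun H => Submodule.comap H₀.subtype H) '' B)}) :
      IndFactored K d A P

/-- Inductively free arrangements with their multisets of exponents. -/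
inductive IndFree (K : Type) [Field K] :
    (d : ℕ) → Set (Submodule K (Fin d → K)) → Multiset ℕ → Prop
  | empty (d : ℕ) : IndFree K d ∅ (Multiset.replicate d 0)
  | step (d : ℕ) (A : Set (Submodule K (Fin d → K))) (H₀ : Submodule K (Fin d → K))
      (m : ℕ) (φ : ↥H₀ ≃ₗ[K] (Fin m → K)) (E : Multiset ℕ) (e : ℕ)
      (hH₀ : H₀ ∈ A)
      (hdel : IndFree K d (A \ {H₀}) (e ::ₘ E))
      (hres : IndFree K m
        ((fun Y => Submodule.map (φ : ↥H₀ →ₗ[K] (Fin m → K)) Y) ''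
          ((fun H => Submodule.comap H₀.subtype H) '' (A \ {H₀}))) E) :
      IndFree K d A ((e+1) ::ₘ E)

/-! ## Asphericity -/

/-- The complement of (the union of) a complex arrangement in `ℂ^n`. -/
def arrComp {n : ℕ} (A : Set (Submodule ℂ (Fin n → ℂ))) : Set (Fin n → ℂ) :=
  {v | ∀ H ∈ A, v ∉ H}

/-- A space is aspherical if all its homotopy groups `π_m`, `m ≥ 2`, vanish. -/
def IsAspherical (X : Type*) [TopologicalSpace X] : Prop :=
  ∀ (x : X) (m : ℕ), 2 ≤ m → Subsingleton (HomotopyGroup (Fin m) X x)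

/-- A complex arrangement is `K(π,1)` if its complement is aspherical. -/
def IsKPi1 {n : ℕ} (A : Set (Submodule ℂ (Fin n → ℂ))) : Prop :=
  IsAspherical ↥(arrComp A)

/-! ## Formality -/

/-- Formality: all linear dependencies among (any choice of) defining forms of the
hyperplanes are generated by the dependencies supported on rank-two flats. -/
def IsFormal {K V : Type*} [Field K] [AddCommGroup V] [Module K V]
    (A : Set (Submodule K V)) : Prop :=
  ∀ α : Submodule K V → (V →ₗ[K] K),
    (∀ H ∈ A, LinearMap.ker (α H) = H) →
    ∀ c : Submodule K V →₀ K, ↑c.support ⊆ A →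
      (∑ H ∈ c.support, c H • α H) = 0 →
      c ∈ Submodule.span K
        {r : Submodule K V →₀ K | ↑r.support ⊆ A ∧
          (∑ H ∈ r.support, r H • α H) = 0 ∧
          ∃ X ∈ lat A, Module.finrank K (V ⧸ X) = 2 ∧ ∀ H ∈ r.support, X ≤ H}

/-- Combinatorial formality. -/
def IsCombFormal {K V : Type*} [Field K] [AddCommGroup V] [Module K V]
    (A : Set (Submodule K V)) : Prop :=
  IsFormal A ∧ ∀ (K' : Type) [Field K'] (m : ℕ) (B : Set (Submodule K' (Fin m → K'))),
    IsCentralArr B → Nonempty (↥(lat B) ≃o ↥(lat A)) → IsFormal B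

/-! ## Line closure -/

/-- `C` is a line-closed subset of the arrangement `A`. -/
def IsLineClosed {K V : Type*} [Field K] [AddCommGroup V] [Module K V]
    (A C : Set (Submodule K V)) : Prop :=
  ∀ H ∈ C, ∀ H' ∈ C, {H'' | H'' ∈ A ∧ H ⊓ H' ≤ H''} ⊆ C

/-- The line closure of `B` in `A`. -/
def lineClosure {K V : Type*} [Field K] [AddCommGroup V] [Module K V]
    (A B : Set (Submodule K V)) : Set (Submodule K V) :=
  ⋂₀ {C | B ⊆ C ∧ C ⊆ A ∧ IsLineClosed A C}

/-! ## MAT-freeness -/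

/-- MAT-freeness of an arrangement in `K^n`. -/
def IsMATFree (K : Type*) [Field K] {n : ℕ}
    (A : Set (Submodule K (Fin n → K))) : Prop :=
  ∃ (m : ℕ) (π : Fin m → Set (Submodule K (Fin n → K))),
    (⋃ i, π i) = A ∧
    (∀ i, (π i).Nonempty) ∧
    (∀ i j, i ≠ j → Disjoint (π i) (π j)) ∧
    ∀ j : Fin m,
      (n = (π j).ncard + Module.finrank K ↥(sInf (π j) : Submodule K (Fin n → K))) ∧
      (¬ (SetLike.coe (sInf (π j) : Submodule K (Fin n → K)) ⊆
          ⋃ H ∈ {H | ∃ i : Fin m, i < j ∧ H ∈ π i}, SetLike.coe H)) ∧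
      ∀ H ∈ π j,
        {H' | ∃ i : Fin m, i < j ∧ H' ∈ π i}.ncard =
          ((fun H' => H' ⊓ H) '' {H' | ∃ i : Fin m, i < j ∧ H' ∈ π i}).ncard + j.1

/-! ## Subarrangements by size, supersolvability -/

/-- The ideal subarrangement `A_G^s` of hyperplanes `H_I` with `|I| ≤ s`. -/
noncomputable def AGs (K : Type*) [Field K] {n : ℕ} (G : SimpleGraph (Fin n)) (s : ℕ) :
    Set (Submodule K (Fin n → K)) :=
  hypI n K '' {I | I ∈ connSets G ∧ I.card ≤ s}

/-- The closure of a subspace in the intersection lattice of `A`. -/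
noncomputable def flatClosure {K V : Type*} [Field K] [AddCommGroup V] [Module K V]
    (A : Set (Submodule K V)) (Z : Submodule K V) : Submodule K V :=
  sInf {H | H ∈ A ∧ Z ≤ H}

/-- The rank (codimension) of a subspace of `K^n`. -/
noncomputable def arrRank (K : Type*) [Field K] {n : ℕ}
    (X : Submodule K (Fin n → K)) : ℕ :=
  n - Module.finrank K ↥X

/-- A modular flat of an arrangement. -/
noncomputable def IsModularFlat (K : Type*) [Field K] {n : ℕ}
    (A : Set (Submodule K (Fin n → K))) (X : Submodule K (Fin n → K)) : Prop :=
  X ∈ lat A ∧ ∀ Y ∈ lat A,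
    arrRank K X + arrRank K Y =
      arrRank K (X ⊓ Y) + arrRank K (flatClosure A (X ⊔ Y))

/-- Supersolvability: a maximal chain of modular flats in `L(A)`. -/
noncomputable def IsSupersolvable (K : Type*) [Field K] {n : ℕ}
    (A : Set (Submodule K (Fin n → K))) : Prop :=
  ∃ c : ℕ → Submodule K (Fin n → K),
    c 0 = ⊤ ∧ c (arrRank K (sInf A)) = sInf A ∧
    (∀ i ≤ arrRank K (sInf A), IsModularFlat K A (c i) ∧ arrRank K (c i) = i) ∧
    ∀ i < arrRank K (sInf A), c (i + 1) ≤ c i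
/-- The hyperplane `ker (x_j + ⋯ + x_{k-1})` in `ℚ^n`. -/
noncomputable def segHyp (n j k : ℕ) : Submodule ℚ (Fin n → ℚ) :=
  hypI n ℚ (Finset.univ.filter fun i : Fin n => j ≤ i.1 ∧ i.1 < k)

/-- The hyperplane `H_k = ker (2x_0 + x_1 + ⋯ + x_k)` in `ℚ^n`. -/
noncomputable def doubleHyp (n k : ℕ) : Submodule ℚ (Fin n → ℚ) :=
  LinearMap.ker ((sumForm n ℚ (Finset.univ.filter fun i : Fin n => i.1 = 0)) +
    sumForm n ℚ (Finset.univ.filter fun i : Fin n => i.1 ≤ k))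

/-- The arrangement `B_n = A_{P_n} ∪ {H_1, …, H_{n-1}}` in `ℚ^n` (coordinates
`x_0, …, x_{n-1}`). -/
noncomputable def BnArr (n : ℕ) : Set (Submodule ℚ (Fin n → ℚ)) :=
  connArr ℚ (pathGraph' n) ∪ {H | ∃ k, 1 ≤ k ∧ k ≤ n - 1 ∧ H = doubleHyp n k}

/-- The block `π_k = {ker(x_j + ⋯ + x_{k-1}) : j < k} ∪ {H_{k-1}}`. -/
noncomputable def BnBlock (n k : ℕ) : Set (Submodule ℚ (Fin n → ℚ)) :=
  {H | (∃ j, j < k ∧ H = segHyp n j k) ∨ H = doubleHyp n (k - 1)}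

/-- The partition `π = (π_1 | π_2 | … | π_n)` of `B_n` with `π_1 = {ker x_0}`. -/
noncomputable def BnPart (n : ℕ) : Set (Set (Submodule ℚ (Fin n → ℚ))) :=
  insert {segHyp n 0 1} {B | ∃ k, 2 ≤ k ∧ k ≤ n ∧ B = BnBlock n k}

/-! ### Auxiliary development -/

section Aux

open Submodule

/-- The linear form of a segment hyperplane. -/
noncomputable def segForm (n j k : ℕ) : (Fin n → ℚ) →ₗ[ℚ] ℚ :=
  sumForm n ℚ (Finset.univ.filter fun i : Fin n => j ≤ i.1 ∧ i.1 < k)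

/-- The linear form of a double hyperplane. -/
noncomputable def dblForm (n k : ℕ) : (Fin n → ℚ) →ₗ[ℚ] ℚ :=
  (sumForm n ℚ (Finset.univ.filter fun i : Fin n => i.1 = 0)) +
    sumForm n ℚ (Finset.univ.filter fun i : Fin n => i.1 ≤ k)

lemma segHyp_eq_ker (n j k : ℕ) : segHyp n j k = LinearMap.ker (segForm n j k) := rfl

lemma doubleHyp_eq_ker (n k : ℕ) : doubleHyp n k = LinearMap.ker (dblForm n k) := rfl

lemma sumForm_single (n : ℕ) (I : Finset (Fin n)) (i : Fin n) (c : ℚ) :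
    sumForm n ℚ I (Pi.single i c) = if i ∈ I then c else 0 := by
  classical
  simp only [sumForm, LinearMap.sum_apply, LinearMap.proj_apply, Pi.single_apply]
  rw [Finset.sum_ite_eq' I i (fun _ => c)]

lemma segForm_single (n j k : ℕ) (i : Fin n) (c : ℚ) :
    segForm n j k (Pi.single i c) = if j ≤ i.1 ∧ i.1 < k then c else 0 := by
  rw [segForm, sumForm_single]; simp

lemma dblForm_single (n k : ℕ) (i : Fin n) (c : ℚ) :
    dblForm n k (Pi.single i c) =
      (if i.1 = 0 then c else 0) + (if i.1 ≤ k then c else 0) := by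
  simp only [dblForm, LinearMap.add_apply, sumForm_single]
  simp

end Aux

section Aux2
open Submodule

lemma segHyp_mem_single (n j k : ℕ) (i : Fin n) :
    Pi.single i (1:ℚ) ∈ segHyp n j k ↔ ¬ (j ≤ i.1 ∧ i.1 < k) := by
  rw [segHyp_eq_ker, LinearMap.mem_ker, segForm_single]
  split_ifs with h <;> simp [h]

lemma doubleHyp_mem_single (n k : ℕ) (i : Fin n) :
    Pi.single i (1:ℚ) ∈ doubleHyp n k ↔ ¬ (i.1 = 0 ∨ i.1 ≤ k) := by
  rw [doubleHyp_eq_ker, LinearMap.mem_ker, dblForm_single]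
  split_ifs with h1 h2 h2 <;> norm_num <;> omega

lemma segHyp_inj {n j k j' k' : ℕ} (hjk : j < k) (hk : k ≤ n) (hjk' : j' < k')
    (hk' : k' ≤ n) (h : segHyp n j k = segHyp n j' k') : j = j' ∧ k = k' := by
  have key : ∀ i : ℕ, i < n → ((j ≤ i ∧ i < k) ↔ (j' ≤ i ∧ i < k')) := by
    intro i hi
    have h1 := segHyp_mem_single n j k ⟨i, hi⟩
    have h2 := segHyp_mem_single n j' k' ⟨i, hi⟩
    rw [h] at h1; rw [h1] at h2
    simp only [Fin.val_mk] at h2 ⊢; tauto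
  have k1 := (key j (by omega)).1 ⟨le_rfl, by omega⟩
  have k2 := (key j' (by omega)).2 ⟨le_rfl, by omega⟩
  have k3 := (key (k-1) (by omega)).1 ⟨by omega, by omega⟩
  have k4 := (key (k'-1) (by omega)).2 ⟨by omega, by omega⟩
  omega

lemma doubleHyp_inj {n k k' : ℕ} (hk : k < n) (hk' : k' < n)
    (h : doubleHyp n k = doubleHyp n k') : k = k' := by
  have key : ∀ i : ℕ, i < n → ((i = 0 ∨ i ≤ k) ↔ (i = 0 ∨ i ≤ k')) := by
    intro i hi
    have h1 := doubleHyp_mem_single n k ⟨i, hi⟩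
    have h2 := doubleHyp_mem_single n k' ⟨i, hi⟩
    rw [h] at h1; rw [h1] at h2
    simp only [Fin.val_mk] at h2 ⊢; tauto
  have k1 := key (max k k') (by omega)
  omega

lemma segHyp_ne_doubleHyp {n j k k' : ℕ} (hjk : j < k) (hk : k ≤ n) (hk1 : 1 ≤ k')
    (hk' : k' ≤ n - 1) (hn : 2 ≤ n) : segHyp n j k ≠ doubleHyp n k' := by
  intro h
  have key : ∀ i : ℕ, i < n → ((j ≤ i ∧ i < k) ↔ (i = 0 ∨ i ≤ k')) := by
    intro i hi
    have h1 := segHyp_mem_single n j k ⟨i, hi⟩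
    have h2 := doubleHyp_mem_single n k' ⟨i, hi⟩
    rw [h] at h1; rw [h1] at h2
    simp only [Fin.val_mk] at h2 ⊢; tauto
  have k1 := (key 0 (by omega)).2 (Or.inl rfl)
  have k2 := (key k' (by omega)).2 (Or.inr le_rfl)
  have k3 := (key (k-1) (by omega)).1 ⟨by omega, by omega⟩
  -- so j = 0 and k = k' + 1 ≥ 2
  have e1 : segForm n j k (Pi.single (⟨0, by omega⟩ : Fin n) (1:ℚ)) = 1 := by
    rw [segForm_single]
    exact if_pos ⟨(by omega : j ≤ 0), (by omega : 0 < k)⟩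
  have e2 : segForm n j k (Pi.single (⟨1, by omega⟩ : Fin n) (-1:ℚ)) = -1 := by
    rw [segForm_single]
    exact if_pos ⟨(by omega : j ≤ 1), (by omega : 1 < k)⟩
  have hx : Pi.single (⟨0, by omega⟩ : Fin n) (1:ℚ) + Pi.single (⟨1, by omega⟩ : Fin n) (-1:ℚ)
      ∈ segHyp n j k := by
    rw [segHyp_eq_ker, LinearMap.mem_ker, map_add, e1, e2]; norm_num
  rw [h, doubleHyp_eq_ker, LinearMap.mem_ker, map_add, dblForm_single, dblForm_single] at hx
  rw [if_pos (rfl : ((⟨0, by omega⟩ : Fin n) : ℕ) = 0), if_pos ((by omega : (0:ℕ) ≤ k')),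
    if_neg ((by omega : ¬ (1:ℕ) = 0)), if_pos ((by omega : (1:ℕ) ≤ k'))] at hx
  norm_num at hx
end Aux2



section Aux3
open Submodule

lemma val_succAbove' {n : ℕ} (p : Fin (n+1)) (i : Fin n) :
    (p.succAbove i).1 = if i.1 < p.1 then i.1 else i.1 + 1 := by
  rcases lt_or_ge (Fin.castSucc i) p with h | h
  · rw [Fin.succAbove_of_castSucc_lt _ _ h]
    have h' : i.1 < p.1 := by simpa [Fin.lt_def] using h
    simp [h']
  · rw [Fin.succAbove_of_le_castSucc _ _ h]
    have h' : p.1 ≤ i.1 := by simpa [Fin.le_def] using h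
    rw [Fin.val_succ, if_neg (by omega)]

/-- Projection deleting coordinate `p`. -/
noncomputable def projL (n : ℕ) (p : Fin (n+1)) : (Fin (n+1) → ℚ) →ₗ[ℚ] (Fin n → ℚ) :=
  LinearMap.funLeft ℚ ℚ p.succAbove

/-- Insertion of a zero at coordinate `p`. -/
noncomputable def insL (n : ℕ) (p : Fin (n+1)) : (Fin n → ℚ) →ₗ[ℚ] (Fin (n+1) → ℚ) where
  toFun z := Fin.insertNth (α := fun _ => ℚ) p 0 z
  map_add' x y := by
    funext i
    by_cases hi : i = p
    · subst hi
      simp only [Fin.insertNth_apply_same, Pi.add_apply]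
      rw [add_zero]
    · obtain ⟨j, rfl⟩ := Fin.exists_succAbove_eq hi
      simp only [Fin.insertNth_apply_succAbove, Pi.add_apply]
  map_smul' c x := by
    funext i
    by_cases hi : i = p
    · subst hi
      simp only [Fin.insertNth_apply_same, RingHom.id_apply, Pi.smul_apply]
      rw [smul_zero]
    · obtain ⟨j, rfl⟩ := Fin.exists_succAbove_eq hi
      simp only [Fin.insertNth_apply_succAbove, RingHom.id_apply, Pi.smul_apply]

lemma insL_apply_same {n : ℕ} (p : Fin (n+1)) (z : Fin n → ℚ) : insL n p z p = 0 :=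
  Fin.insertNth_apply_same (α := fun _ => ℚ) p 0 z

lemma insL_apply_succAbove {n : ℕ} (p : Fin (n+1)) (z : Fin n → ℚ) (j : Fin n) :
    insL n p z (p.succAbove j) = z j :=
  Fin.insertNth_apply_succAbove (α := fun _ => ℚ) p 0 z j

lemma projL_apply {n : ℕ} (p : Fin (n+1)) (x : Fin (n+1) → ℚ) (i : Fin n) :
    projL n p x i = x (p.succAbove i) := rfl

lemma projL_insL {n : ℕ} (p : Fin (n+1)) (z : Fin n → ℚ) : projL n p (insL n p z) = z := by
  funext i; rw [projL_apply, insL_apply_succAbove]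

lemma insL_projL {n : ℕ} (p : Fin (n+1)) (x : Fin (n+1) → ℚ) :
    insL n p (projL n p x) = x - x p • (Pi.single p 1 : Fin (n+1) → ℚ) := by
  funext i
  by_cases hi : i = p
  · subst hi
    rw [insL_apply_same]
    simp [Pi.single_eq_same]
  · obtain ⟨j, rfl⟩ := Fin.exists_succAbove_eq hi
    rw [insL_apply_succAbove, projL_apply]
    simp [Pi.single_eq_of_ne (Fin.succAbove_ne p j)]

lemma insL_single {n : ℕ} (p : Fin (n+1)) (i : Fin n) (c : ℚ) :
    insL n p (Pi.single i c) = Pi.single (p.succAbove i) c := by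
  funext a
  by_cases ha : a = p
  · rw [ha, insL_apply_same, Pi.single_eq_of_ne (Fin.ne_succAbove p i)]
  · obtain ⟨j, rfl⟩ := Fin.exists_succAbove_eq ha
    rw [insL_apply_succAbove, Pi.single_apply, Pi.single_apply]
    simp [Fin.succAbove_right_inj]

/-- The back map into `ker g`. -/
noncomputable def backL (n : ℕ) (p : Fin (n+1)) (g : (Fin (n+1) → ℚ) →ₗ[ℚ] ℚ) :
    (Fin n → ℚ) →ₗ[ℚ] (Fin (n+1) → ℚ) :=
  insL n p - LinearMap.smulRight (g ∘ₗ insL n p) (Pi.single p 1 : Fin (n+1) → ℚ)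

lemma backL_apply {n : ℕ} (p : Fin (n+1)) (g : (Fin (n+1) → ℚ) →ₗ[ℚ] ℚ) (z : Fin n → ℚ) :
    backL n p g z = insL n p z - g (insL n p z) • (Pi.single p 1 : Fin (n+1) → ℚ) := rfl

lemma g_backL {n : ℕ} {p : Fin (n+1)} {g : (Fin (n+1) → ℚ) →ₗ[ℚ] ℚ}
    (hg : g (Pi.single p 1) = 1) (z : Fin n → ℚ) : g (backL n p g z) = 0 := by
  rw [backL_apply, map_sub, map_smul, hg, smul_eq_mul, mul_one, sub_self]

lemma projL_backL {n : ℕ} (p : Fin (n+1)) (g : (Fin (n+1) → ℚ) →ₗ[ℚ] ℚ) (z : Fin n → ℚ) :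
    projL n p (backL n p g z) = z := by
  rw [backL_apply, map_sub, map_smul, projL_insL]
  have h0 : projL n p (Pi.single p (1:ℚ)) = 0 := by
    funext i; rw [projL_apply, Pi.single_eq_of_ne (Fin.succAbove_ne p i)]; rfl
  rw [h0, smul_zero, sub_zero]

lemma backL_mem_ker {n : ℕ} {p : Fin (n+1)} {g : (Fin (n+1) → ℚ) →ₗ[ℚ] ℚ}
    (hg : g (Pi.single p 1) = 1) (z : Fin n → ℚ) : backL n p g z ∈ LinearMap.ker g :=
  LinearMap.mem_ker.2 (g_backL hg z)

/-- The coordinatization of the hyperplane `ker g`. -/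
noncomputable def hypEquiv (n : ℕ) (p : Fin (n+1)) (g : (Fin (n+1) → ℚ) →ₗ[ℚ] ℚ)
    (hg : g (Pi.single p 1) = 1) : ↥(LinearMap.ker g) ≃ₗ[ℚ] (Fin n → ℚ) :=
  LinearEquiv.ofLinear ((projL n p) ∘ₗ (LinearMap.ker g).subtype)
    (LinearMap.codRestrict _ (backL n p g) (fun z => backL_mem_ker hg z))
    (LinearMap.ext fun z => projL_backL p g z)
    (LinearMap.ext fun x => Subtype.ext (by
      obtain ⟨x, hx⟩ := x
      have hgx : g x = 0 := LinearMap.mem_ker.1 hx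
      show backL n p g (projL n p x) = x
      rw [backL_apply, insL_projL, map_sub, map_smul, hgx, smul_eq_mul]
      simp [hg]))

lemma hypEquiv_apply {n : ℕ} (p : Fin (n+1)) (g : (Fin (n+1) → ℚ) →ₗ[ℚ] ℚ)
    (hg : g (Pi.single p 1) = 1) (x : ↥(LinearMap.ker g)) :
    hypEquiv n p g hg x = projL n p x.1 := by
  simp only [hypEquiv, LinearEquiv.ofLinear_apply]; rfl

lemma hypEquiv_coe_apply {n : ℕ} (p : Fin (n+1)) (g : (Fin (n+1) → ℚ) →ₗ[ℚ] ℚ)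
    (hg : g (Pi.single p 1) = 1) (x : ↥(LinearMap.ker g)) :
    (hypEquiv n p g hg : ↥(LinearMap.ker g) →ₗ[ℚ] (Fin n → ℚ)) x = projL n p x.1 := by
  rw [LinearEquiv.coe_coe, hypEquiv_apply]

/-- R1: restriction to `ker g` doesn't see multiples of `g`. -/
lemma comap_ker_shift {n : ℕ} (g f : (Fin n → ℚ) →ₗ[ℚ] ℚ) (c : ℚ) :
    comap (LinearMap.ker g).subtype (LinearMap.ker f) =
      comap (LinearMap.ker g).subtype (LinearMap.ker (f - c • g)) := by
  ext x
  obtain ⟨x, hx⟩ := x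
  have hgx : g x = 0 := LinearMap.mem_ker.1 hx
  simp [LinearMap.mem_ker, hgx]

/-- R2: computing the restriction of a hyperplane in coordinates. -/
lemma map_hypEquiv_comap {n : ℕ} (p : Fin (n+1)) (g : (Fin (n+1) → ℚ) →ₗ[ℚ] ℚ)
    (hg : g (Pi.single p 1) = 1) (f : (Fin (n+1) → ℚ) →ₗ[ℚ] ℚ)
    (hf : f (Pi.single p 1) = 0) :
    Submodule.map (hypEquiv n p g hg : ↥(LinearMap.ker g) →ₗ[ℚ] (Fin n → ℚ))
      (comap (LinearMap.ker g).subtype (LinearMap.ker f)) = LinearMap.ker (f ∘ₗ insL n p) := by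
  ext z
  constructor
  · rintro ⟨⟨x, hxg⟩, hxf, hz⟩
    have hgx : g x = 0 := LinearMap.mem_ker.1 hxg
    have hfx : f x = 0 := LinearMap.mem_ker.1 hxf
    rw [LinearEquiv.coe_coe, hypEquiv_apply] at hz
    have hz' : projL n p x = z := hz
    rw [LinearMap.mem_ker, LinearMap.comp_apply, ← hz', insL_projL, map_sub, map_smul, hfx,
      hf, smul_eq_mul, mul_zero, sub_zero]
  · intro hz
    have hz' : f (insL n p z) = 0 := LinearMap.mem_ker.1 hz
    refine ⟨⟨backL n p g z, backL_mem_ker hg z⟩, ?_, ?_⟩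
    · show f (backL n p g z) = 0
      rw [backL_apply, map_sub, map_smul, hz', hf, smul_eq_mul, mul_zero, sub_zero]
    · rw [LinearEquiv.coe_coe, hypEquiv_apply]
      exact projL_backL p g z

lemma form_ext {n : ℕ} {f g : (Fin n → ℚ) →ₗ[ℚ] ℚ}
    (h : ∀ i : Fin n, f (Pi.single i 1) = g (Pi.single i 1)) : f = g := by
  apply LinearMap.pi_ext'
  intro i
  apply LinearMap.ext_ring
  simpa using h i

lemma comp_insL_single {n : ℕ} (p : Fin (n+1)) (f : (Fin (n+1) → ℚ) →ₗ[ℚ] ℚ) (i : Fin n) (c : ℚ) :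
    (f ∘ₗ insL n p) (Pi.single i c) = f (Pi.single (p.succAbove i) c) := by
  rw [LinearMap.comp_apply, insL_single]

lemma ker_smul_form {n : ℕ} (f : (Fin n → ℚ) →ₗ[ℚ] ℚ) (c : ℚ) (hc : c ≠ 0) :
    LinearMap.ker (c • f) = LinearMap.ker f := LinearMap.ker_smul _ c hc

end Aux3



section Aux4
open Submodule

lemma pathGraph'_adj {n : ℕ} (a b : Fin n) :
    (pathGraph' n).Adj a b ↔ a ≠ b ∧ (a.1 + 1 = b.1 ∨ b.1 + 1 = a.1) := by
  rw [pathGraph', SimpleGraph.fromRel_adj]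

/-- The interval `[j,k)` as a finset of `Fin n`. -/
def intervalFin (n j k : ℕ) : Finset (Fin n) :=
  Finset.univ.filter fun i : Fin n => j ≤ i.1 ∧ i.1 < k

lemma mem_intervalFin {n j k : ℕ} (i : Fin n) :
    i ∈ intervalFin n j k ↔ j ≤ i.1 ∧ i.1 < k := by
  simp [intervalFin]

lemma mem_coe_intervalFin {n j k : ℕ} (i : Fin n) :
    i ∈ (intervalFin n j k : Set (Fin n)) ↔ j ≤ i.1 ∧ i.1 < k := by
  rw [Finset.mem_coe, mem_intervalFin]

lemma intervalFin_connected {n j k : ℕ} (hjk : j < k) (hk : k ≤ n) :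
    ((pathGraph' n).induce (intervalFin n j k : Set (Fin n))).Connected := by
  have hj : j < n := by omega
  have hu₀ : (⟨j, hj⟩ : Fin n) ∈ (intervalFin n j k : Set (Fin n)) := by
    rw [mem_coe_intervalFin]; exact ⟨le_rfl, hjk⟩
  set u₀ : ↥(intervalFin n j k : Set (Fin n)) := ⟨⟨j, hj⟩, hu₀⟩ with hu₀def
  have key : ∀ d (u : ↥(intervalFin n j k : Set (Fin n))), u.1.1 = j + d →
      ((pathGraph' n).induce (intervalFin n j k : Set (Fin n))).Reachable u₀ u := by
    intro d
    induction d with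
    | zero =>
      intro u hu
      have : u = u₀ := Subtype.ext (Fin.ext (by rw [hu]; rfl))
      rw [this]
    | succ d ih =>
      intro u hu
      have hu2 : u.1.1 < k := ((mem_coe_intervalFin u.1).1 u.2).2
      have hwmem : (⟨j + d, by omega⟩ : Fin n) ∈ (intervalFin n j k : Set (Fin n)) := by
        rw [mem_coe_intervalFin]
        exact ⟨(by omega : j ≤ j + d), (by omega : j + d < k)⟩
      have hr := ih ⟨⟨j + d, by omega⟩, hwmem⟩ rfl
      have hadj' : (pathGraph' n).Adj ⟨j + d, by omega⟩ u.1 := by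
        rw [pathGraph'_adj]
        refine ⟨Fin.ne_of_val_ne ?_, Or.inl ?_⟩
        · show j + d ≠ u.1.1
          omega
        · show (j + d) + 1 = u.1.1
          omega
      have hadj : ((pathGraph' n).induce (intervalFin n j k : Set (Fin n))).Adj
          ⟨⟨j + d, by omega⟩, hwmem⟩ u := hadj'
      exact hr.trans hadj.reachable
  rw [SimpleGraph.connected_iff]
  refine ⟨fun u v => ?_, ⟨u₀⟩⟩
  have hu1 : j ≤ u.1.1 := ((mem_coe_intervalFin u.1).1 u.2).1
  have hv1 : j ≤ v.1.1 := ((mem_coe_intervalFin v.1).1 v.2).1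
  exact (key (u.1.1 - j) u (by omega)).symm.trans (key (v.1.1 - j) v (by omega))

lemma walk_ivt {n : ℕ} {I : Finset (Fin n)} {a b : ↥(I : Set (Fin n))}
    (w : ((pathGraph' n).induce (I : Set (Fin n))).Walk a b) :
    ∀ v : ℕ, a.1.1 ≤ v → v ≤ b.1.1 → ∃ c : ↥(I : Set (Fin n)), c.1.1 = v := by
  induction w with
  | nil =>
    intro v h1 h2
    rename_i u
    exact ⟨u, by omega⟩
  | @cons u x b h w ih =>
    intro v h1 h2
    by_cases hv : u.1.1 = v
    · exact ⟨u, hv⟩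
    · have hadj : (pathGraph' n).Adj u.1 x.1 := h
      rw [pathGraph'_adj] at hadj
      have h3 := hadj.2
      exact ih v (by omega) h2

lemma connSets_path (n : ℕ) : connSets (pathGraph' n) =
    {I | ∃ j k, j < k ∧ k ≤ n ∧ I = intervalFin n j k} := by
  ext I
  constructor
  · rintro ⟨hne, hconn⟩
    have hne' : I.Nonempty := hne
    refine ⟨(I.min' hne').1, (I.max' hne').1 + 1, by
        have := I.min'_le _ (I.max'_mem hne'); exact Nat.lt_succ_of_le this,
      (I.max' hne').2, ?_⟩
    ext i
    rw [mem_intervalFin]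
    constructor
    · intro hi
      exact ⟨I.min'_le i hi, Nat.lt_succ_of_le (I.le_max' i hi)⟩
    · rintro ⟨h1, h2⟩
      have hmin : (I.min' hne' : Fin n) ∈ (I : Set (Fin n)) := I.min'_mem hne'
      have hmax : (I.max' hne' : Fin n) ∈ (I : Set (Fin n)) := I.max'_mem hne'
      obtain ⟨wk⟩ := hconn.preconnected ⟨_, hmin⟩ ⟨_, hmax⟩
      obtain ⟨c, hc⟩ := walk_ivt wk i.1 h1 (show i.1 ≤ (I.max' hne').1 by omega)
      have : c.1 = i := Fin.ext hc
      rw [← this]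
      exact c.2
  · rintro ⟨j, k, hjk, hk, rfl⟩
    exact ⟨⟨⟨j, by omega⟩, (mem_intervalFin _).2 ⟨le_rfl, hjk⟩⟩, intervalFin_connected hjk hk⟩

lemma connArr_path (n : ℕ) : connArr ℚ (pathGraph' n) =
    {H | ∃ j k, j < k ∧ k ≤ n ∧ H = segHyp n j k} := by
  rw [connArr, connSets_path]
  ext H
  constructor
  · rintro ⟨I, ⟨j, k, hjk, hk, rfl⟩, rfl⟩
    exact ⟨j, k, hjk, hk, rfl⟩
  · rintro ⟨j, k, hjk, hk, rfl⟩
    exact ⟨intervalFin n j k, ⟨j, k, hjk, hk, rfl⟩, rfl⟩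

/-- The arrangement `A(n,m)`: all hyperplanes of `B_n` supported in the first `m`
coordinates. -/
noncomputable def ArN (n m : ℕ) : Set (Submodule ℚ (Fin n → ℚ)) :=
  {H | ∃ j k, j < k ∧ k ≤ m ∧ H = segHyp n j k} ∪
    {H | ∃ k, 1 ≤ k ∧ k < m ∧ H = doubleHyp n k}

lemma BnArr_eq_ArN (n : ℕ) : BnArr n = ArN n n := by
  rw [BnArr, connArr_path, ArN]
  congr 1
  ext H
  constructor
  · rintro ⟨k, h1, h2, rfl⟩; exact ⟨k, h1, by omega, rfl⟩
  · rintro ⟨k, h1, h2, rfl⟩; exact ⟨k, h1, by omega, rfl⟩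

end Aux4

section Aux5
open Submodule

/-- Partial top block. -/
noncomputable def BlkN (n m t : ℕ) : Set (Submodule ℚ (Fin n → ℚ)) :=
  {H | ∃ j, j < t ∧ j < m ∧ H = segHyp n j m} ∪
    {H | m < t ∧ 2 ≤ m ∧ H = doubleHyp n (m-1)}

/-- Partial partition. -/
noncomputable def PaN (n m : ℕ) : Set (Set (Submodule ℚ (Fin n → ℚ))) :=
  {B | ∃ k, 1 ≤ k ∧ k ≤ m ∧ B = BnBlock n k}

/-- Exponent multisets. -/
noncomputable def EB : ℕ → Multiset ℕ := fun m =>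
  if m = 0 then 0 else 1 ::ₘ (Multiset.range (m-1)).map (fun i => i + 3)

lemma ArN_zero (n : ℕ) : ArN n 0 = ∅ := by
  apply Set.eq_empty_iff_forall_notMem.2
  rintro H (⟨j, k, h1, h2, _⟩ | ⟨k, h1, h2, _⟩) <;> omega

lemma BlkN_zero (n m : ℕ) : BlkN n m 0 = ∅ := by
  apply Set.eq_empty_iff_forall_notMem.2
  rintro H (⟨j, h1, h2, _⟩ | ⟨h1, h2, _⟩) <;> omega

lemma PaN_zero (n : ℕ) : PaN n 0 = ∅ := by
  apply Set.eq_empty_iff_forall_notMem.2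
  rintro H ⟨k, h1, h2, _⟩; omega

lemma dblForm_zero (n : ℕ) : dblForm n 0 = (2:ℚ) • segForm n 0 1 := by
  apply form_ext
  intro i
  rw [dblForm_single, LinearMap.smul_apply, segForm_single, smul_eq_mul]
  split_ifs <;> norm_num <;> omega

lemma doubleHyp_zero (n : ℕ) : doubleHyp n 0 = segHyp n 0 1 := by
  rw [doubleHyp_eq_ker, dblForm_zero, ker_smul_form _ 2 (by norm_num), ← segHyp_eq_ker]

lemma BnBlock_one (n : ℕ) : BnBlock n 1 = {segHyp n 0 1} := by
  ext H
  simp only [BnBlock, Set.mem_setOf_eq, Set.mem_singleton_iff]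
  constructor
  · rintro (⟨j, hj, rfl⟩ | rfl)
    · have : j = 0 := by omega
      rw [this]
    · exact doubleHyp_zero n
  · rintro rfl
    exact Or.inl ⟨0, by omega, rfl⟩

lemma BnBlock_eq_BlkN {n m : ℕ} (hm : 2 ≤ m) : BnBlock n m = BlkN n m (m+1) := by
  ext H
  simp only [BnBlock, BlkN, Set.mem_setOf_eq, Set.mem_union]
  constructor
  · rintro (⟨j, hj, rfl⟩ | rfl)
    · exact Or.inl ⟨j, by omega, by omega, rfl⟩
    · exact Or.inr ⟨by omega, hm, rfl⟩
  · rintro (⟨j, h1, h2, rfl⟩ | ⟨h1, h2, rfl⟩)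
    · exact Or.inl ⟨j, h2, rfl⟩
    · exact Or.inr rfl

lemma BnBlock_one_eq_BlkN (n : ℕ) : BnBlock n 1 = BlkN n 1 1 := by
  rw [BnBlock_one]
  ext H
  simp only [BlkN, Set.mem_setOf_eq, Set.mem_union, Set.mem_singleton_iff]
  constructor
  · rintro rfl
    exact Or.inl ⟨0, by omega, by omega, rfl⟩
  · rintro (⟨j, h1, h2, rfl⟩ | ⟨h1, h2, rfl⟩) <;> [skip; omega]
    have : j = 0 := by omega
    rw [this]

lemma ArN_succ {n m : ℕ} (hm : 1 ≤ m) :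
    ArN n m = ArN n (m-1) ∪ BlkN n m (m+1) := by
  ext H
  simp only [ArN, BlkN, Set.mem_union, Set.mem_setOf_eq]
  constructor
  · rintro (⟨j, k, h1, h2, rfl⟩ | ⟨k, h1, h2, rfl⟩)
    · rcases Nat.lt_or_ge k m with h | h
      · exact Or.inl (Or.inl ⟨j, k, h1, by omega, rfl⟩)
      · have : k = m := by omega
        subst this
        exact Or.inr (Or.inl ⟨j, by omega, h1, rfl⟩)
    · rcases Nat.lt_or_ge k (m-1) with h | h
      · exact Or.inl (Or.inr ⟨k, h1, h, rfl⟩)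
      · have : k = m - 1 := by omega
        subst this
        exact Or.inr (Or.inr ⟨by omega, by omega, rfl⟩)
  · rintro ((⟨j, k, h1, h2, rfl⟩ | ⟨k, h1, h2, rfl⟩) | (⟨j, h1, h2, rfl⟩ | ⟨h1, h2, rfl⟩))
    · exact Or.inl ⟨j, k, h1, by omega, rfl⟩
    · exact Or.inr ⟨k, h1, by omega, rfl⟩
    · exact Or.inl ⟨j, m, h2, le_rfl, rfl⟩
    · exact Or.inr ⟨m-1, by omega, by omega, rfl⟩

lemma BlkN_succ {n m t : ℕ} (h2m : 2 ≤ m) (ht : t ≤ m) :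
    BlkN n m (t+1) =
      insert (if t < m then segHyp n t m else doubleHyp n (m-1)) (BlkN n m t) := by
  ext H
  simp only [BlkN, Set.mem_union, Set.mem_setOf_eq, Set.mem_insert_iff]
  rcases Nat.lt_or_ge t m with h | h
  · rw [if_pos h]
    constructor
    · rintro (⟨j, h1, h2, rfl⟩ | ⟨h1, h2, rfl⟩)
      · rcases Nat.lt_or_ge j t with h3 | h3
        · exact Or.inr (Or.inl ⟨j, h3, h2, rfl⟩)
        · have : j = t := by omega
          subst this
          exact Or.inl rfl
      · omega
    · rintro (rfl | (⟨j, h1, h2, rfl⟩ | ⟨h1, h2, rfl⟩))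
      · exact Or.inl ⟨t, by omega, h, rfl⟩
      · exact Or.inl ⟨j, by omega, h2, rfl⟩
      · omega
  · have : t = m := by omega
    subst this
    rw [if_neg (by omega)]
    constructor
    · rintro (⟨j, h1, h2, rfl⟩ | ⟨h1, h2, rfl⟩)
      · exact Or.inr (Or.inl ⟨j, h2, h2, rfl⟩)
      · exact Or.inl rfl
    · rintro (rfl | (⟨j, h1, h2, rfl⟩ | ⟨h1, h2, rfl⟩))
      · exact Or.inr ⟨by omega, h2m, rfl⟩
      · exact Or.inl ⟨j, by omega, h2, rfl⟩
      · omega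

lemma PaN_succ {n m : ℕ} (hm : 1 ≤ m) :
    PaN n m = insert (BnBlock n m) (PaN n (m-1)) := by
  ext B
  simp only [PaN, Set.mem_setOf_eq, Set.mem_insert_iff]
  constructor
  · rintro ⟨k, h1, h2, rfl⟩
    rcases Nat.lt_or_ge k m with h | h
    · exact Or.inr ⟨k, h1, by omega, rfl⟩
    · have : k = m := by omega
      subst this
      exact Or.inl rfl
  · rintro (rfl | ⟨k, h1, h2, rfl⟩)
    · exact ⟨m, hm, le_rfl, rfl⟩
    · exact ⟨k, h1, by omega, rfl⟩

/-- Freshness of the new segment hyperplane. -/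
lemma seg_fresh {n m t : ℕ} (ht : t < m) (hmn : m ≤ n) :
    segHyp n t m ∉ ArN n (m-1) ∪ BlkN n m t := by
  rintro ((⟨j, k, h1, h2, he⟩ | ⟨k, h1, h2, he⟩) | (⟨j, h1, h2, he⟩ | ⟨h1, h2, he⟩))
  · have := segHyp_inj ht hmn h1 (by omega) he
    omega
  · exact segHyp_ne_doubleHyp ht hmn h1 (by omega) (by omega) he
  · have := segHyp_inj ht hmn h2 hmn he
    omega
  · omega

/-- Freshness of the new double hyperplane. -/
lemma dbl_fresh {n m : ℕ} (h2m : 2 ≤ m) (hmn : m ≤ n) :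
    doubleHyp n (m-1) ∉ ArN n (m-1) ∪ BlkN n m m := by
  rintro ((⟨j, k, h1, h2, he⟩ | ⟨k, h1, h2, he⟩) | (⟨j, h1, h2, he⟩ | ⟨h1, h2, he⟩))
  · exact segHyp_ne_doubleHyp h1 (by omega) (by omega) (by omega) (by omega) he.symm
  · have := doubleHyp_inj (show m-1 < n by omega) (show k < n by omega) he
    omega
  · exact segHyp_ne_doubleHyp h2 hmn (by omega) (by omega) (by omega) he.symm
  · omega

/-- The current arrangement is disjoint from the partial block. -/
lemma ArN_disj_BlkN {n m t : ℕ} (hm : 1 ≤ m) (hmn : m ≤ n) (ht : t ≤ m+1) :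
    ArN n (m-1) ∩ BlkN n m t = ∅ := by
  apply Set.eq_empty_iff_forall_notMem.2
  rintro H ⟨(⟨j, k, h1, h2, rfl⟩ | ⟨k, h1, h2, rfl⟩), (⟨j', h3, h4, he⟩ | ⟨h3, h4, he⟩)⟩
  · have := segHyp_inj h1 (by omega) h4 hmn he
    omega
  · exact segHyp_ne_doubleHyp h1 (by omega) (by omega) (by omega) (by omega) he
  · exact segHyp_ne_doubleHyp h4 hmn h1 (by omega) (by omega) he.symm
  · have := doubleHyp_inj (show k < n by omega) (by omega) he
    omega

end Aux5

section Aux6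
open Submodule

/-- Composing a segment form with the insertion. -/
lemma segForm_comp_insL {n j k : ℕ} (p : Fin (n+1)) (hk : k ≤ p.1) :
    segForm (n+1) j k ∘ₗ insL n p = segForm n j k := by
  apply form_ext
  intro i
  rw [comp_insL_single, segForm_single, segForm_single]
  have h := val_succAbove' p i
  split_ifs at h <;> split_ifs <;> first | rfl | (exfalso; omega)

/-- Composing a double form with the insertion. -/
lemma dblForm_comp_insL {n k : ℕ} (p : Fin (n+1)) (hk : k < p.1) :
    dblForm (n+1) k ∘ₗ insL n p = dblForm n k := by
  apply form_ext
  intro i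
  rw [comp_insL_single, dblForm_single, dblForm_single]
  have h := val_succAbove' p i
  split_ifs at h <;> split_ifs <;> first | rfl | (exfalso; omega)

/-- Difference of segment forms. -/
lemma segForm_sub {n j t m : ℕ} (hjt : j < t) (htm : t ≤ m) :
    segForm n j m - segForm n t m = segForm n j t := by
  apply form_ext
  intro i
  rw [LinearMap.sub_apply, segForm_single, segForm_single, segForm_single]
  split_ifs <;> first | (exfalso; omega) | norm_num

/-- Difference of a segment form and the double form. -/
lemma segForm_sub_dbl {n j m : ℕ} (h1 : 1 ≤ j) (hjm : j < m) :
    segForm n j m - dblForm n (m-1) = (-1:ℚ) • dblForm n (j-1) := by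
  apply form_ext
  intro i
  rw [LinearMap.sub_apply, LinearMap.smul_apply, segForm_single, dblForm_single, dblForm_single]
  split_ifs <;> first | (exfalso; omega) | norm_num

lemma segForm_zero_sub_dbl {n m : ℕ} (hm : 1 ≤ m) :
    segForm n 0 m - dblForm n (m-1) = (-1:ℚ) • segForm n 0 1 := by
  apply form_ext
  intro i
  rw [LinearMap.sub_apply, LinearMap.smul_apply, segForm_single, dblForm_single, segForm_single]
  split_ifs <;> first | (exfalso; omega) | norm_num

/-- Restriction of an untouched segment hyperplane. -/
lemma RS_seg {n m : ℕ} (p : Fin (n+1)) (hp : p.1 = m-1) (g : (Fin (n+1) → ℚ) →ₗ[ℚ] ℚ)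
    (hg : g (Pi.single p 1) = 1) {j k : ℕ} (hjk : j < k) (hk : k ≤ m-1) :
    Submodule.map (hypEquiv n p g hg : ↥(LinearMap.ker g) →ₗ[ℚ] (Fin n → ℚ))
      (comap (LinearMap.ker g).subtype (segHyp (n+1) j k)) = segHyp n j k := by
  rw [segHyp_eq_ker (n+1),
    map_hypEquiv_comap _ _ _ _ (by rw [segForm_single, if_neg (by omega)]),
    segForm_comp_insL p (by omega), ← segHyp_eq_ker]

/-- Restriction of an untouched double hyperplane. -/
lemma RS_dbl {n m : ℕ} (p : Fin (n+1)) (hp : p.1 = m-1) (g : (Fin (n+1) → ℚ) →ₗ[ℚ] ℚ)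
    (hg : g (Pi.single p 1) = 1) {k : ℕ} (h1 : 1 ≤ k) (hk : k + 1 ≤ m - 1) :
    Submodule.map (hypEquiv n p g hg : ↥(LinearMap.ker g) →ₗ[ℚ] (Fin n → ℚ))
      (comap (LinearMap.ker g).subtype (doubleHyp (n+1) k)) = doubleHyp n k := by
  rw [doubleHyp_eq_ker (n+1),
    map_hypEquiv_comap _ _ _ _ (by rw [dblForm_single, if_neg (by omega), if_neg (by omega)]; norm_num),
    dblForm_comp_insL p (by omega), ← doubleHyp_eq_ker]

/-- The two comap-reduction identities for partial-block elements. -/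
lemma comap_blk_seg {n m t j : ℕ} (hjt : j < t) (htm : t ≤ m) :
    comap (LinearMap.ker (segForm (n+1) t m)).subtype (segHyp (n+1) j m) =
      comap (LinearMap.ker (segForm (n+1) t m)).subtype (segHyp (n+1) j t) := by
  rw [segHyp_eq_ker, segHyp_eq_ker, comap_ker_shift _ _ 1, one_smul, segForm_sub hjt htm]

lemma comap_blk_dbl {n m j : ℕ} (h1 : 1 ≤ j) (hjm : j < m) :
    comap (LinearMap.ker (dblForm (n+1) (m-1))).subtype (segHyp (n+1) j m) =
      comap (LinearMap.ker (dblForm (n+1) (m-1))).subtype (doubleHyp (n+1) (j-1)) := by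
  rw [segHyp_eq_ker, doubleHyp_eq_ker, comap_ker_shift _ _ 1, one_smul,
    segForm_sub_dbl h1 hjm, ker_smul_form _ _ (by norm_num)]

lemma comap_blk_dbl_zero {n m : ℕ} (hm : 1 ≤ m) :
    comap (LinearMap.ker (dblForm (n+1) (m-1))).subtype (segHyp (n+1) 0 m) =
      comap (LinearMap.ker (dblForm (n+1) (m-1))).subtype (segHyp (n+1) 0 1) := by
  rw [segHyp_eq_ker, segHyp_eq_ker (n+1) 0 1, comap_ker_shift _ _ 1, one_smul,
    segForm_zero_sub_dbl hm, ker_smul_form _ _ (by norm_num)]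

end Aux6

section Aux7
open Submodule

lemma EB_zero : EB 0 = 0 := by simp [EB]

lemma EB_one : EB 1 = 1 ::ₘ 0 := by simp [EB]

lemma EB_succ {m : ℕ} (hm : 2 ≤ m) : EB m = (m+1) ::ₘ EB (m-1) := by
  rw [EB, EB, if_neg (by omega), if_neg (by omega)]
  have h1 : m - 1 = (m-2) + 1 := by omega
  rw [h1, Multiset.range_succ, Multiset.map_cons]
  have h2 : m - 2 + 3 = m + 1 := by omega
  have h3 : m - 2 + 1 - 1 = m - 2 := by omega
  rw [h2, h3, Multiset.cons_swap]

lemma zero_cons_rep (X : Multiset ℕ) (r : ℕ) :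
    0 ::ₘ (X + Multiset.replicate r 0) = X + Multiset.replicate (r+1) 0 := by
  rw [Multiset.replicate_succ, Multiset.add_cons]

lemma ArN_one (n : ℕ) : ArN n 1 = {segHyp n 0 1} := by
  ext H
  simp only [ArN, Set.mem_union, Set.mem_setOf_eq, Set.mem_singleton_iff]
  constructor
  · rintro (⟨j, k, h1, h2, rfl⟩ | ⟨k, h1, h2, rfl⟩)
    · have hj : j = 0 := by omega
      have hk : k = 1 := by omega
      rw [hj, hk]
    · omega
  · rintro rfl
    exact Or.inl ⟨0, 1, by omega, le_rfl, rfl⟩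

lemma BlkN_mono {n m t t' : ℕ} (h : t ≤ t') : BlkN n m t ⊆ BlkN n m t' := by
  rintro H (⟨j, h1, h2, rfl⟩ | ⟨h1, h2, rfl⟩)
  · exact Or.inl ⟨j, by omega, h2, rfl⟩
  · exact Or.inr ⟨by omega, h2, rfl⟩

lemma seg_mem_BlkN {n m t : ℕ} (ht : 1 ≤ t) (hm : 1 ≤ m) :
    segHyp n 0 m ∈ BlkN n m t :=
  Or.inl ⟨0, by omega, by omega, rfl⟩

lemma seg_mem_BnBlock {n k : ℕ} (hk : 1 ≤ k) : segHyp n 0 k ∈ BnBlock n k :=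
  Or.inl ⟨0, by omega, rfl⟩

lemma BnBlock_sub_ArN {n k M : ℕ} (h1 : 1 ≤ k) (h2 : k ≤ M) :
    BnBlock n k ⊆ ArN n M := by
  rintro H (⟨j, hj, rfl⟩ | rfl)
  · exact Or.inl ⟨j, k, hj, h2, rfl⟩
  · rcases Nat.lt_or_ge k 2 with h | h
    · have : k = 1 := by omega
      subst this
      rw [doubleHyp_zero]
      exact Or.inl ⟨0, 1, by omega, by omega, rfl⟩
    · exact Or.inr ⟨k - 1, by omega, by omega, rfl⟩

lemma seg_notmem_BlkN {n k m t : ℕ} (h1 : 1 ≤ k) (h2 : k < m) (hmn : m ≤ n) :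
    segHyp n 0 k ∉ BlkN n m t := by
  rintro (⟨j, hj1, hj2, he⟩ | ⟨hm1, hm2, he⟩)
  · have := segHyp_inj (show (0:ℕ) < k by omega) (by omega) hj2 hmn he
    omega
  · exact segHyp_ne_doubleHyp (show (0:ℕ) < k by omega) (by omega) (by omega) (by omega)
      (by omega) he

lemma BnBlock_ne_BlkN {n k m t : ℕ} (h1 : 1 ≤ k) (h2 : k < m) (hmn : m ≤ n) :
    BnBlock n k ≠ BlkN n m t := by
  intro h
  exact seg_notmem_BlkN h1 h2 hmn (h ▸ seg_mem_BnBlock h1)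

lemma BnPart_eq_PaN {n : ℕ} (hn : 1 ≤ n) : BnPart n = PaN n n := by
  ext B
  simp only [BnPart, PaN, Set.mem_insert_iff, Set.mem_setOf_eq]
  constructor
  · rintro (rfl | ⟨k, h1, h2, rfl⟩)
    · exact ⟨1, le_rfl, hn, (BnBlock_one n).symm⟩
    · exact ⟨k, by omega, h2, rfl⟩
  · rintro ⟨k, h1, h2, rfl⟩
    rcases Nat.lt_or_ge k 2 with h | h
    · have : k = 1 := by omega
      subst this
      exact Or.inl (BnBlock_one n)
    · exact Or.inr ⟨k, h, h2, rfl⟩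

end Aux7

section Aux8
open Submodule

variable {n m : ℕ} (p : Fin (n+1)) (g : (Fin (n+1) → ℚ) →ₗ[ℚ] ℚ)
  (hg : g (Pi.single p 1) = 1)

/-- Restriction of one hyperplane, in coordinates. -/
noncomputable def mapRes : Submodule ℚ (Fin (n+1) → ℚ) → Submodule ℚ (Fin n → ℚ) :=
  fun H => Submodule.map ((hypEquiv n p g hg : ↥(LinearMap.ker g) →ₗ[ℚ] (Fin n → ℚ)))
    (Submodule.comap (LinearMap.ker g).subtype H)

lemma mapRes_seg (hp : p.1 = m-1) {j k : ℕ} (hjk : j < k) (hk : k ≤ m-1) :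
    mapRes p g hg (segHyp (n+1) j k) = segHyp n j k := RS_seg p hp g hg hjk hk

lemma mapRes_dbl (hp : p.1 = m-1) {k : ℕ} (h1 : 1 ≤ k) (hk : k < m-1) :
    mapRes p g hg (doubleHyp (n+1) k) = doubleHyp n k := RS_dbl p hp g hg h1 (by omega)

lemma mapRes_ArN_mem (hp : p.1 = m-1) {H : Submodule ℚ (Fin (n+1) → ℚ)}
    (hH : H ∈ ArN (n+1) (m-1)) : mapRes p g hg H ∈ ArN n (m-1) := by
  rcases hH with ⟨j, k, hjk, hk, rfl⟩ | ⟨k, h1, hk, rfl⟩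
  · rw [mapRes_seg p g hg hp hjk hk]
    exact Or.inl ⟨j, k, hjk, hk, rfl⟩
  · rw [mapRes_dbl p g hg hp h1 hk]
    exact Or.inr ⟨k, h1, hk, rfl⟩

lemma mapRes_ArN_surj (hp : p.1 = m-1) :
    ArN n (m-1) ⊆ mapRes p g hg '' (ArN (n+1) (m-1)) := by
  rintro H (⟨j, k, hjk, hk, rfl⟩ | ⟨k, h1, hk, rfl⟩)
  · exact ⟨segHyp (n+1) j k, Or.inl ⟨j, k, hjk, hk, rfl⟩, mapRes_seg p g hg hp hjk hk⟩
  · exact ⟨doubleHyp (n+1) k, Or.inr ⟨k, h1, hk, rfl⟩, mapRes_dbl p g hg hp h1 hk⟩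

lemma mapRes_BnBlock (hp : p.1 = m-1) {k : ℕ} (h1 : 1 ≤ k) (hk : k ≤ m-1) :
    mapRes p g hg '' BnBlock (n+1) k = BnBlock n k := by
  rcases Nat.lt_or_ge k 2 with h | h
  · have : k = 1 := by omega
    subst this
    rw [BnBlock_one, BnBlock_one, Set.image_singleton,
      mapRes_seg p g hg hp (by omega) (by omega)]
  · apply Set.Subset.antisymm
    · rintro H ⟨H', ⟨j, hj, rfl⟩ | rfl, rfl⟩
      · rw [mapRes_seg p g hg hp hj hk]
        exact Or.inl ⟨j, hj, rfl⟩
      · rw [mapRes_dbl p g hg hp (by omega) (by omega)]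
        exact Or.inr rfl
    · rintro H (⟨j, hj, rfl⟩ | rfl)
      · exact ⟨segHyp (n+1) j k, Or.inl ⟨j, hj, rfl⟩, mapRes_seg p g hg hp hj hk⟩
      · exact ⟨doubleHyp (n+1) (k-1), Or.inr rfl, mapRes_dbl p g hg hp (by omega) (by omega)⟩

include hg in
lemma comap_inj_ArN (hp : p.1 = m-1) (hmn : m ≤ n+1) :
    Set.InjOn (fun H => Submodule.comap (LinearMap.ker g).subtype H) (ArN (n+1) (m-1)) := by
  intro H hH H' hH' heq
  have heq' : Submodule.comap (LinearMap.ker g).subtype H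
      = Submodule.comap (LinearMap.ker g).subtype H' := heq
  have heq2 : mapRes p g hg H = mapRes p g hg H' := by
    unfold mapRes
    rw [heq']
  rcases hH with ⟨j, k, hjk, hk, rfl⟩ | ⟨k, h1, hk, rfl⟩ <;>
    rcases hH' with ⟨j', k', hjk', hk', rfl⟩ | ⟨k', h1', hk', rfl⟩
  · rw [mapRes_seg p g hg hp hjk hk, mapRes_seg p g hg hp hjk' hk'] at heq2
    have := segHyp_inj hjk (by omega) hjk' (by omega) heq2
    rw [this.1, this.2]
  · rw [mapRes_seg p g hg hp hjk hk, mapRes_dbl p g hg hp h1' hk'] at heq2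
    exact absurd heq2 (segHyp_ne_doubleHyp hjk (by omega) h1' (by omega) (by omega))
  · rw [mapRes_dbl p g hg hp h1 hk, mapRes_seg p g hg hp hjk' hk'] at heq2
    exact absurd heq2.symm (segHyp_ne_doubleHyp hjk' (by omega) h1 (by omega) (by omega))
  · rw [mapRes_dbl p g hg hp h1 hk, mapRes_dbl p g hg hp h1' hk'] at heq2
    rw [doubleHyp_inj (by omega) (by omega) heq2]

/-- Reduction of a partial-block element, segment pivot case. -/
lemma blk_red_seg {t j : ℕ} (htm : t < m) (hjt : j < t) :
    Submodule.comap (LinearMap.ker (segForm (n+1) t m)).subtype (segHyp (n+1) j m) =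
      Submodule.comap (LinearMap.ker (segForm (n+1) t m)).subtype (segHyp (n+1) j t) :=
  comap_blk_seg hjt (by omega)

/-- Reduction of a partial-block element, double pivot case. -/
lemma blk_red_dbl {j : ℕ} (h2m : 2 ≤ m) (hjm : j < m) :
    ∃ H', H' ∈ ArN (n+1) (m-1) ∧
      Submodule.comap (LinearMap.ker (dblForm (n+1) (m-1))).subtype (segHyp (n+1) j m) =
        Submodule.comap (LinearMap.ker (dblForm (n+1) (m-1))).subtype H' := by
  rcases Nat.lt_or_ge j 1 with h | h
  · have : j = 0 := by omega
    subst this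
    exact ⟨segHyp (n+1) 0 1, Or.inl ⟨0, 1, by omega, by omega, rfl⟩,
      comap_blk_dbl_zero (by omega)⟩
  · rcases Nat.lt_or_ge j 2 with h2 | h2
    · have : j = 1 := by omega
      subst this
      refine ⟨segHyp (n+1) 0 1, Or.inl ⟨0, 1, by omega, by omega, rfl⟩, ?_⟩
      have := comap_blk_dbl (n := n) (m := m) le_rfl hjm
      rwa [show (1:ℕ) - 1 = 0 from rfl, doubleHyp_zero] at this
    · exact ⟨doubleHyp (n+1) (j-1), Or.inr ⟨j-1, by omega, by omega, rfl⟩,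
        comap_blk_dbl (by omega) hjm⟩

/-- Reduction of a partial-block element, segment pivot case, packaged. -/
lemma blk_red_seg' {t j : ℕ} (htm : t < m) (hjt : j < t) :
    ∃ H', H' ∈ ArN (n+1) (m-1) ∧
      Submodule.comap (LinearMap.ker (segForm (n+1) t m)).subtype (segHyp (n+1) j m) =
        Submodule.comap (LinearMap.ker (segForm (n+1) t m)).subtype H' :=
  ⟨segHyp (n+1) j t, Or.inl ⟨j, t, hjt, by omega, rfl⟩, blk_red_seg htm hjt⟩

end Aux8

section Main
open Submodule

set_option maxHeartbeats 1000000 in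
lemma main_ind : ∀ n : ℕ, ∀ m : ℕ, m ≤ n →
    IndFactored ℚ n (ArN n m) (PaN n m) ∧
    IndFree ℚ n (ArN n m) (EB m + Multiset.replicate (n - m) 0) := by
  intro n
  induction n with
  | zero =>
    intro m hm
    have hm0 : m = 0 := by omega
    subst hm0
    rw [ArN_zero, PaN_zero]
    refine ⟨IndFactored.empty 0, ?_⟩
    have he : EB 0 + Multiset.replicate (0 - 0) 0 = Multiset.replicate 0 0 := by simp [EB]
    rw [he]
    exact IndFree.empty 0
  | succ n IHn =>
    intro m
    induction m with
    | zero =>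
      intro _
      rw [ArN_zero, PaN_zero]
      refine ⟨IndFactored.empty (n+1), ?_⟩
      have he : EB 0 + Multiset.replicate (n + 1 - 0) 0 = Multiset.replicate (n+1) 0 := by
        simp [EB]
      rw [he]
      exact IndFree.empty (n+1)
    | succ M IHm =>
      intro hmn
      rcases Nat.eq_zero_or_pos M with hM0 | hM1
      · -- m = 1 : a single hyperplane
        subst hM0
        have hg : segForm (n+1) 0 1 (Pi.single (⟨0, by omega⟩ : Fin (n+1)) 1) = 1 := by
          rw [segForm_single]
          exact if_pos ⟨le_rfl, Nat.zero_lt_one⟩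
        set φ := hypEquiv n ⟨0, by omega⟩ (segForm (n+1) 0 1) hg with hφdef
        have hA : ArN (n+1) 1 = {segHyp (n+1) 0 1} := ArN_one (n+1)
        have hP : PaN (n+1) 1 = {BnBlock (n+1) 1} := by
          ext B
          simp only [PaN, Set.mem_setOf_eq, Set.mem_singleton_iff]
          constructor
          · rintro ⟨k, h1, h2, rfl⟩
            have : k = 1 := by omega
            rw [this]
          · rintro rfl
            exact ⟨1, le_rfl, le_rfl, rfl⟩
        have hdiff : ({segHyp (n+1) 0 1} : Set (Submodule ℚ (Fin (n+1) → ℚ)))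
            \ {segHyp (n+1) 0 1} = ∅ := Set.diff_self
        constructor
        · rw [hA, hP]
          refine IndFactored.step (n+1) {segHyp (n+1) 0 1} {BnBlock (n+1) 1}
            (BnBlock (n+1) 1) (segHyp (n+1) 0 1) n φ rfl
            (Or.inl ⟨0, Nat.zero_lt_one, rfl⟩) rfl ?_ ?_ ?_
          · -- bijection on the empty set
            have h1 : ({segHyp (n+1) 0 1} : Set (Submodule ℚ (Fin (n+1) → ℚ)))
                \ BnBlock (n+1) 1 = ∅ := by
              rw [BnBlock_one]; exact Set.diff_self
            rw [h1, hdiff, Set.image_empty]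
            exact Set.bijOn_empty _
          · rw [hdiff]
            have h3 : {C | ∃ B ∈ ({BnBlock (n+1) 1} : Set (Set (Submodule ℚ (Fin (n+1) → ℚ)))),
                C = B ∩ (∅ : Set (Submodule ℚ (Fin (n+1) → ℚ))) ∧ C.Nonempty} = ∅ := by
              apply Set.eq_empty_iff_forall_notMem.2
              rintro C ⟨B, hB, rfl, hne⟩
              rw [Set.inter_empty] at hne
              exact Set.not_nonempty_empty hne
            rw [h3]
            exact IndFactored.empty (n+1)
          · rw [hdiff, Set.image_empty, Set.image_empty]
            convert IndFactored.empty n using 2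
            apply Set.eq_empty_iff_forall_notMem.2
            rintro C ⟨B, hB, hne, _⟩
            exact hne hB
        · have he : EB 1 + Multiset.replicate (n + 1 - 1) 0
              = (0 + 1) ::ₘ Multiset.replicate n 0 := by
            rw [EB_one]
            simp
          rw [hA, he]
          refine IndFree.step (n+1) {segHyp (n+1) 0 1} (segHyp (n+1) 0 1) n φ
            (Multiset.replicate n 0) 0 rfl ?_ ?_
          · rw [hdiff]
            have : (0:ℕ) ::ₘ Multiset.replicate n 0 = Multiset.replicate (n+1) 0 :=
              (Multiset.replicate_succ 0 n).symm
            rw [this]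
            exact IndFree.empty (n+1)
          · rw [hdiff, Set.image_empty, Set.image_empty]
            exact IndFree.empty n
      · -- m = M + 1 ≥ 2
        have h2m : 2 ≤ M + 1 := by omega
        have key : ∀ t, t ≤ M + 2 →
            IndFactored ℚ (n+1) (ArN (n+1) M ∪ BlkN (n+1) (M+1) t)
              (if t = 0 then PaN (n+1) M
                else insert (BlkN (n+1) (M+1) t) (PaN (n+1) M)) ∧
            IndFree ℚ (n+1) (ArN (n+1) M ∪ BlkN (n+1) (M+1) t)
              (t ::ₘ (EB M + Multiset.replicate (n - M) 0)) := by
          intro t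
          induction t with
          | zero =>
            intro _
            rw [BlkN_zero, Set.union_empty, if_pos rfl]
            have base := IHm (by omega)
            refine ⟨base.1, ?_⟩
            have he : (0 : ℕ) ::ₘ (EB M + Multiset.replicate (n - M) 0)
                = EB M + Multiset.replicate (n + 1 - M) 0 := by
              rw [zero_cons_rep]
              have hnm : n - M + 1 = n + 1 - M := by omega
              rw [hnm]
            rw [he]
            exact base.2
          | succ t iht =>
            intro ht1
            have ht : t ≤ M + 1 := by omega
            rw [if_neg (Nat.succ_ne_zero t)]
            rcases Nat.lt_or_ge t (M+1) with htm | hge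
            · -- segment pivot
              have hg : segForm (n+1) t (M+1)
                  (Pi.single (⟨M, by omega⟩ : Fin (n+1)) 1) = 1 := by
                rw [segForm_single]
                exact if_pos ⟨(by omega : t ≤ M), (by omega : M < M + 1)⟩
              have hp : (⟨M, by omega⟩ : Fin (n+1)).1 = (M+1) - 1 := rfl
              set φ := hypEquiv n ⟨M, by omega⟩ (segForm (n+1) t (M+1)) hg with hφdef
              have hfresh : segHyp (n+1) t (M+1) ∉ ArN (n+1) M ∪ BlkN (n+1) (M+1) t :=
                seg_fresh (n := n+1) (m := M+1) (t := t) htm (by omega)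
              have hA1 : ArN (n+1) M ∪ BlkN (n+1) (M+1) (t+1)
                  = insert (segHyp (n+1) t (M+1)) (ArN (n+1) M ∪ BlkN (n+1) (M+1) t) := by
                rw [BlkN_succ h2m ht, if_pos htm, Set.union_insert]
              have hdelset : (ArN (n+1) M ∪ BlkN (n+1) (M+1) (t+1)) \ {segHyp (n+1) t (M+1)}
                  = ArN (n+1) M ∪ BlkN (n+1) (M+1) t := by
                rw [hA1]
                exact Set.insert_diff_self_of_notMem hfresh
              have hH₀A : segHyp (n+1) t (M+1) ∈ ArN (n+1) M ∪ BlkN (n+1) (M+1) (t+1) := by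
                rw [hA1]; exact Set.mem_insert _ _
              have hH₀B : segHyp (n+1) t (M+1) ∈ BlkN (n+1) (M+1) (t+1) :=
                Or.inl ⟨t, by omega, htm, rfl⟩
              have hABdisj : ArN (n+1) M ∩ BlkN (n+1) (M+1) (t+1) = ∅ :=
                ArN_disj_BlkN (n := n+1) (m := M+1) (t := t+1) (by omega) (by omega) (by omega)
              have hAB1 : (ArN (n+1) M ∪ BlkN (n+1) (M+1) (t+1)) \ BlkN (n+1) (M+1) (t+1)
                  = ArN (n+1) M := by
                ext H
                constructor
                · rintro ⟨hH | hH, hnB⟩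
                  · exact hH
                  · exact absurd hH hnB
                · intro hH
                  exact ⟨Or.inl hH,
                    fun hB => Set.eq_empty_iff_forall_notMem.1 hABdisj H ⟨hH, hB⟩⟩
              have hblk : ∀ H ∈ BlkN (n+1) (M+1) t, ∃ H', H' ∈ ArN (n+1) M ∧
                  Submodule.comap (LinearMap.ker (segForm (n+1) t (M+1))).subtype H
                    = Submodule.comap (LinearMap.ker (segForm (n+1) t (M+1))).subtype H' := by
                rintro H (⟨j, hj1, hj2, rfl⟩ | ⟨hmt, _, _⟩)
                · exact blk_red_seg' htm hj1
                · omega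
              have hint : BlkN (n+1) (M+1) (t+1) ∩ (ArN (n+1) M ∪ BlkN (n+1) (M+1) t)
                  = BlkN (n+1) (M+1) t := by
                rw [Set.inter_union_distrib_left,
                  Set.inter_comm (BlkN (n+1) (M+1) (t+1)) (ArN (n+1) M), hABdisj,
                  Set.empty_union]
                exact Set.inter_eq_right.2 (BlkN_mono (by omega))
              have hbij : Set.BijOn (fun H => Submodule.comap (segHyp (n+1) t (M+1)).subtype H)
                  ((ArN (n+1) M ∪ BlkN (n+1) (M+1) (t+1)) \ BlkN (n+1) (M+1) (t+1))
                  ((fun H => Submodule.comap (segHyp (n+1) t (M+1)).subtype H) ''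
                    ((ArN (n+1) M ∪ BlkN (n+1) (M+1) (t+1)) \ {segHyp (n+1) t (M+1)})) := by
                rw [hAB1, hdelset]
                refine ⟨fun H hH => ⟨H, Or.inl hH, rfl⟩, ?_, ?_⟩
                · exact comap_inj_ArN _ _ hg hp (by omega)
                · rintro y ⟨H, hH | hH, rfl⟩
                  · exact Set.mem_image_of_mem _ hH
                  · obtain ⟨H', hH', heq⟩ := hblk H hH
                    exact ⟨H', hH', heq.symm⟩
              have hpdel : {C | ∃ B ∈ insert (BlkN (n+1) (M+1) (t+1)) (PaN (n+1) M),
                  C = B ∩ (ArN (n+1) M ∪ BlkN (n+1) (M+1) t) ∧ C.Nonempty}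
                  = (if t = 0 then PaN (n+1) M
                      else insert (BlkN (n+1) (M+1) t) (PaN (n+1) M)) := by
                ext C
                simp only [Set.mem_setOf_eq, Set.mem_insert_iff]
                constructor
                · rintro ⟨B, rfl | ⟨k, h1, h2, rfl⟩, rfl, hne⟩
                  · rw [hint] at hne ⊢
                    have ht0 : t ≠ 0 := by
                      rintro rfl
                      rw [BlkN_zero] at hne
                      exact Set.not_nonempty_empty hne
                    rw [if_neg ht0]
                    exact Set.mem_insert _ _
                  · have hsub : BnBlock (n+1) k ⊆ ArN (n+1) M ∪ BlkN (n+1) (M+1) t :=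
                      fun H hH => Or.inl (BnBlock_sub_ArN h1 h2 hH)
                    rw [Set.inter_eq_left.2 hsub]
                    split_ifs
                    · exact ⟨k, h1, h2, rfl⟩
                    · exact Set.mem_insert_of_mem _ ⟨k, h1, h2, rfl⟩
                · intro hC
                  by_cases ht0 : t = 0
                  · subst ht0
                    rw [if_pos rfl] at hC
                    obtain ⟨k, h1, h2, rfl⟩ := hC
                    have hsub : BnBlock (n+1) k ⊆ ArN (n+1) M ∪ BlkN (n+1) (M+1) 0 :=
                      fun H hH => Or.inl (BnBlock_sub_ArN h1 h2 hH)
                    exact ⟨BnBlock (n+1) k, Or.inr ⟨k, h1, h2, rfl⟩,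
                      (Set.inter_eq_left.2 hsub).symm,
                      ⟨_, seg_mem_BnBlock h1⟩⟩
                  · rw [if_neg ht0] at hC
                    rcases hC with rfl | ⟨k, h1, h2, rfl⟩
                    · exact ⟨BlkN (n+1) (M+1) (t+1), Or.inl rfl, hint.symm,
                        ⟨_, seg_mem_BlkN (by omega) (by omega)⟩⟩
                    · have hsub : BnBlock (n+1) k ⊆ ArN (n+1) M ∪ BlkN (n+1) (M+1) t :=
                        fun H hH => Or.inl (BnBlock_sub_ArN h1 h2 hH)
                      exact ⟨BnBlock (n+1) k, Or.inr ⟨k, h1, h2, rfl⟩,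
                        (Set.inter_eq_left.2 hsub).symm,
                        ⟨_, seg_mem_BnBlock h1⟩⟩
              constructor
              · refine IndFactored.step _ _ _ (BlkN (n+1) (M+1) (t+1)) (segHyp (n+1) t (M+1))
                  n φ (Set.mem_insert _ _) hH₀B hH₀A hbij ?_ ?_
                · rw [hdelset, hpdel]
                  exact (iht (by omega)).1
                · convert (IHn M (by omega)).1 using 2
                  · rw [hdelset]
                    simp only [Set.image_image]
                    apply Set.Subset.antisymm
                    · rintro y ⟨H, hH | hH, rfl⟩
                      · exact mapRes_ArN_mem _ _ hg hp hH
                      · obtain ⟨H', hH', heq⟩ := hblk H hH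
                        show mapRes ⟨M, by omega⟩ (segForm (n+1) t (M+1)) hg H ∈ ArN n M
                        unfold mapRes
                        rw [heq]
                        exact mapRes_ArN_mem _ _ hg hp hH'
                    · intro y hy
                      obtain ⟨H, hH, heq⟩ := mapRes_ArN_surj _ _ hg hp hy
                      exact ⟨H, Or.inl hH, heq⟩
                  · ext C
                    simp only [Set.mem_setOf_eq, Set.mem_insert_iff]
                    constructor
                    · rintro ⟨B, rfl | ⟨k, h1, h2, rfl⟩, hne, rfl⟩
                      · exact absurd rfl hne
                      · refine ⟨k, h1, h2, ?_⟩
                        simp only [Set.image_image]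
                        exact mapRes_BnBlock _ _ hg hp h1 h2
                    · rintro ⟨k, h1, h2, rfl⟩
                      refine ⟨BnBlock (n+1) k, Or.inr ⟨k, h1, h2, rfl⟩,
                        BnBlock_ne_BlkN h1 (by omega) (by omega), ?_⟩
                      simp only [Set.image_image]
                      exact (mapRes_BnBlock _ _ hg hp h1 h2).symm
              · refine IndFree.step _ _ (segHyp (n+1) t (M+1)) n φ
                  (EB M + Multiset.replicate (n - M) 0) t hH₀A ?_ ?_
                · rw [hdelset]
                  exact (iht (by omega)).2
                · convert (IHn M (by omega)).2 using 2
                  rw [hdelset]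
                  simp only [Set.image_image]
                  apply Set.Subset.antisymm
                  · rintro y ⟨H, hH | hH, rfl⟩
                    · exact mapRes_ArN_mem _ _ hg hp hH
                    · obtain ⟨H', hH', heq⟩ := hblk H hH
                      show mapRes ⟨M, by omega⟩ (segForm (n+1) t (M+1)) hg H ∈ ArN n M
                      unfold mapRes
                      rw [heq]
                      exact mapRes_ArN_mem _ _ hg hp hH'
                  · intro y hy
                    obtain ⟨H, hH, heq⟩ := mapRes_ArN_surj _ _ hg hp hy
                    exact ⟨H, Or.inl hH, heq⟩
            · -- double pivot
              have hteq : t = M + 1 := by omega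
              subst hteq
              have hg : dblForm (n+1) M
                  (Pi.single (⟨M, by omega⟩ : Fin (n+1)) 1) = 1 := by
                rw [dblForm_single, if_neg (show ¬(M = 0) by omega),
                  if_pos (show M ≤ M from le_rfl)]
                norm_num
              have hp : (⟨M, by omega⟩ : Fin (n+1)).1 = (M+1) - 1 := rfl
              set φ := hypEquiv n ⟨M, by omega⟩ (dblForm (n+1) M) hg with hφdef
              have hfresh : doubleHyp (n+1) M ∉ ArN (n+1) M ∪ BlkN (n+1) (M+1) (M+1) :=
                dbl_fresh (n := n+1) (m := M+1) h2m (by omega)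
              have hA1 : ArN (n+1) M ∪ BlkN (n+1) (M+1) (M+1+1)
                  = insert (doubleHyp (n+1) M) (ArN (n+1) M ∪ BlkN (n+1) (M+1) (M+1)) := by
                rw [BlkN_succ h2m le_rfl, if_neg (by omega), Set.union_insert,
                  Nat.add_sub_cancel]
              have hdelset : (ArN (n+1) M ∪ BlkN (n+1) (M+1) (M+1+1)) \ {doubleHyp (n+1) M}
                  = ArN (n+1) M ∪ BlkN (n+1) (M+1) (M+1) := by
                rw [hA1]
                exact Set.insert_diff_self_of_notMem hfresh
              have hH₀A : doubleHyp (n+1) M ∈ ArN (n+1) M ∪ BlkN (n+1) (M+1) (M+1+1) := by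
                rw [hA1]; exact Set.mem_insert _ _
              have hH₀B : doubleHyp (n+1) M ∈ BlkN (n+1) (M+1) (M+1+1) :=
                Or.inr ⟨by omega, h2m, rfl⟩
              have hABdisj : ArN (n+1) M ∩ BlkN (n+1) (M+1) (M+1+1) = ∅ :=
                ArN_disj_BlkN (n := n+1) (m := M+1) (t := M+1+1) (by omega) (by omega) (by omega)
              have hAB1 : (ArN (n+1) M ∪ BlkN (n+1) (M+1) (M+1+1)) \ BlkN (n+1) (M+1) (M+1+1)
                  = ArN (n+1) M := by
                ext H
                constructor
                · rintro ⟨hH | hH, hnB⟩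
                  · exact hH
                  · exact absurd hH hnB
                · intro hH
                  exact ⟨Or.inl hH,
                    fun hB => Set.eq_empty_iff_forall_notMem.1 hABdisj H ⟨hH, hB⟩⟩
              have hblk : ∀ H ∈ BlkN (n+1) (M+1) (M+1), ∃ H', H' ∈ ArN (n+1) M ∧
                  Submodule.comap (LinearMap.ker (dblForm (n+1) M)).subtype H
                    = Submodule.comap (LinearMap.ker (dblForm (n+1) M)).subtype H' := by
                rintro H (⟨j, hj1, hj2, rfl⟩ | ⟨hmt, _, _⟩)
                · exact blk_red_dbl h2m hj2
                · omega
              have hint : BlkN (n+1) (M+1) (M+1+1) ∩ (ArN (n+1) M ∪ BlkN (n+1) (M+1) (M+1))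
                  = BlkN (n+1) (M+1) (M+1) := by
                rw [Set.inter_union_distrib_left,
                  Set.inter_comm (BlkN (n+1) (M+1) (M+1+1)) (ArN (n+1) M), hABdisj,
                  Set.empty_union]
                exact Set.inter_eq_right.2 (BlkN_mono (by omega))
              have hbij : Set.BijOn (fun H => Submodule.comap (doubleHyp (n+1) M).subtype H)
                  ((ArN (n+1) M ∪ BlkN (n+1) (M+1) (M+1+1)) \ BlkN (n+1) (M+1) (M+1+1))
                  ((fun H => Submodule.comap (doubleHyp (n+1) M).subtype H) ''
                    ((ArN (n+1) M ∪ BlkN (n+1) (M+1) (M+1+1)) \ {doubleHyp (n+1) M})) := by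
                rw [hAB1, hdelset]
                refine ⟨fun H hH => ⟨H, Or.inl hH, rfl⟩, ?_, ?_⟩
                · exact comap_inj_ArN _ _ hg hp (by omega)
                · rintro y ⟨H, hH | hH, rfl⟩
                  · exact Set.mem_image_of_mem _ hH
                  · obtain ⟨H', hH', heq⟩ := hblk H hH
                    exact ⟨H', hH', heq.symm⟩
              have hpdel : {C | ∃ B ∈ insert (BlkN (n+1) (M+1) (M+1+1)) (PaN (n+1) M),
                  C = B ∩ (ArN (n+1) M ∪ BlkN (n+1) (M+1) (M+1)) ∧ C.Nonempty}
                  = (if M+1 = 0 then PaN (n+1) M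
                      else insert (BlkN (n+1) (M+1) (M+1)) (PaN (n+1) M)) := by
                rw [if_neg (by omega)]
                ext C
                simp only [Set.mem_setOf_eq, Set.mem_insert_iff]
                constructor
                · rintro ⟨B, rfl | ⟨k, h1, h2, rfl⟩, rfl, hne⟩
                  · rw [hint]
                    exact Or.inl rfl
                  · have hsub : BnBlock (n+1) k ⊆ ArN (n+1) M ∪ BlkN (n+1) (M+1) (M+1) :=
                      fun H hH => Or.inl (BnBlock_sub_ArN h1 h2 hH)
                    rw [Set.inter_eq_left.2 hsub]
                    exact Or.inr ⟨k, h1, h2, rfl⟩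
                · rintro (rfl | ⟨k, h1, h2, rfl⟩)
                  · exact ⟨BlkN (n+1) (M+1) (M+1+1), Or.inl rfl, hint.symm,
                      ⟨_, seg_mem_BlkN (by omega) (by omega)⟩⟩
                  · have hsub : BnBlock (n+1) k ⊆ ArN (n+1) M ∪ BlkN (n+1) (M+1) (M+1) :=
                      fun H hH => Or.inl (BnBlock_sub_ArN h1 h2 hH)
                    exact ⟨BnBlock (n+1) k, Or.inr ⟨k, h1, h2, rfl⟩,
                      (Set.inter_eq_left.2 hsub).symm,
                      ⟨_, seg_mem_BnBlock h1⟩⟩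
              constructor
              · refine IndFactored.step _ _ _ (BlkN (n+1) (M+1) (M+1+1)) (doubleHyp (n+1) M)
                  n φ (Set.mem_insert _ _) hH₀B hH₀A hbij ?_ ?_
                · rw [hdelset, hpdel, if_neg (by omega)]
                  exact (iht (by omega)).1
                · convert (IHn M (by omega)).1 using 2
                  · rw [hdelset]
                    simp only [Set.image_image]
                    apply Set.Subset.antisymm
                    · rintro y ⟨H, hH | hH, rfl⟩
                      · exact mapRes_ArN_mem _ _ hg hp hH
                      · obtain ⟨H', hH', heq⟩ := hblk H hH
                        show mapRes ⟨M, by omega⟩ (dblForm (n+1) M) hg H ∈ ArN n M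
                        unfold mapRes
                        rw [heq]
                        exact mapRes_ArN_mem _ _ hg hp hH'
                    · intro y hy
                      obtain ⟨H, hH, heq⟩ := mapRes_ArN_surj _ _ hg hp hy
                      exact ⟨H, Or.inl hH, heq⟩
                  · ext C
                    simp only [Set.mem_setOf_eq, Set.mem_insert_iff]
                    constructor
                    · rintro ⟨B, rfl | ⟨k, h1, h2, rfl⟩, hne, rfl⟩
                      · exact absurd rfl hne
                      · refine ⟨k, h1, h2, ?_⟩
                        simp only [Set.image_image]
                        exact mapRes_BnBlock _ _ hg hp h1 h2
                    · rintro ⟨k, h1, h2, rfl⟩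
                      refine ⟨BnBlock (n+1) k, Or.inr ⟨k, h1, h2, rfl⟩,
                        BnBlock_ne_BlkN h1 (by omega) (by omega), ?_⟩
                      simp only [Set.image_image]
                      exact (mapRes_BnBlock _ _ hg hp h1 h2).symm
              · refine IndFree.step _ _ (doubleHyp (n+1) M) n φ
                  (EB M + Multiset.replicate (n - M) 0) (M+1) hH₀A ?_ ?_
                · rw [hdelset]
                  exact (iht (by omega)).2
                · convert (IHn M (by omega)).2 using 2
                  rw [hdelset]
                  simp only [Set.image_image]
                  apply Set.Subset.antisymm
                  · rintro y ⟨H, hH | hH, rfl⟩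
                    · exact mapRes_ArN_mem _ _ hg hp hH
                    · obtain ⟨H', hH', heq⟩ := hblk H hH
                      show mapRes ⟨M, by omega⟩ (dblForm (n+1) M) hg H ∈ ArN n M
                      unfold mapRes
                      rw [heq]
                      exact mapRes_ArN_mem _ _ hg hp hH'
                  · intro y hy
                    obtain ⟨H, hH, heq⟩ := mapRes_ArN_surj _ _ hg hp hy
                    exact ⟨H, Or.inl hH, heq⟩

        have final := key (M+2) le_rfl
        have hA : ArN (n+1) (M+1) = ArN (n+1) M ∪ BlkN (n+1) (M+1) (M+2) := by
          have := ArN_succ (n := n+1) (m := M+1) (by omega)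
          rwa [Nat.add_sub_cancel] at this
        have hP : (if (M+2) = 0 then PaN (n+1) M
            else insert (BlkN (n+1) (M+1) (M+2)) (PaN (n+1) M)) = PaN (n+1) (M+1) := by
          rw [if_neg (by omega), ← BnBlock_eq_BlkN h2m]
          have := PaN_succ (n := n+1) (m := M+1) (by omega)
          rw [Nat.add_sub_cancel] at this
          rw [this]
        have hE : ((M+2) : ℕ) ::ₘ (EB M + Multiset.replicate (n - M) 0)
            = EB (M+1) + Multiset.replicate (n + 1 - (M+1)) 0 := by
          have h1 : EB (M+1) = (M+2) ::ₘ EB M := by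
            have := EB_succ (m := M+1) h2m
            rwa [Nat.add_sub_cancel] at this
          have h2 : n + 1 - (M + 1) = n - M := by omega
          rw [h1, h2, Multiset.cons_add]
        rw [hA, ← hP]
        refine ⟨final.1, ?_⟩
        rw [← hE]
        exact final.2

end Main

/-- For `n ≥ 2` the partition `π` is an inductive factorization
of `B_n`; in particular `B_n` is inductively free with exponents
`(1, 3, 4, …, n+1)`. -/
theorem BnArr_indFactored (n : ℕ) (hn : 2 ≤ n) :
    IndFactored ℚ n (BnArr n) (BnPart n) ∧
    IndFree ℚ n (BnArr n) (1 ::ₘ (Multiset.range (n - 1)).map (fun i => i + 3)) := by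
  have h := main_ind n n le_rfl
  rw [BnArr_eq_ArN, BnPart_eq_PaN (by omega : 1 ≤ n)]
  refine ⟨h.1, ?_⟩
  have he : EB n + Multiset.replicate (n - n) 0
      = 1 ::ₘ (Multiset.range (n - 1)).map (fun i => i + 3) := by
    rw [Nat.sub_self, Multiset.replicate_zero, add_zero, EB, if_neg (by omega)]
  rw [← he]
  exact h.2
end

section
/- For any fixed field K and any connected simple graph G, the connected subgraph arrangement A_G(K) is combinatorially formal: A_G(K) is formal, and every arrangement whose intersection lattice is isomorphic to that of A_G(K) is also formal. -/
open Submodule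

/-! ### Auxiliary results for the proof -/

set_option linter.unusedSectionVars false
set_option maxHeartbeats 1000000

open Module

section LinAlg
variable {K V : Type*} [Field K] [AddCommGroup V] [Module K V] [FiniteDimensional K V]

lemma codim_add_finrank (X : Submodule K V) :
    finrank K (V ⧸ X) + finrank K X = finrank K V :=
  Submodule.finrank_quotient_add_finrank X

lemma codim_anti {X Y : Submodule K V} (h : X ≤ Y) :
    finrank K (V ⧸ Y) ≤ finrank K (V ⧸ X) := by
  have h1 := codim_add_finrank X
  have h2 := codim_add_finrank Y
  have := Submodule.finrank_mono h
  omega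

lemma codim_lt_of_lt {X Y : Submodule K V} (h : X < Y) :
    finrank K (V ⧸ Y) < finrank K (V ⧸ X) := by
  have h1 := codim_add_finrank X
  have h2 := codim_add_finrank Y
  have := Submodule.finrank_lt_finrank_of_lt h
  omega

lemma eq_of_le_of_codim_eq {X Y : Submodule K V} (h : X ≤ Y)
    (hc : finrank K (V ⧸ X) = finrank K (V ⧸ Y)) : X = Y := by
  have h1 := codim_add_finrank X
  have h2 := codim_add_finrank Y
  exact Submodule.eq_of_le_of_finrank_eq h (by omega)

lemma isCoatom_ker_of_ne_zero {f : V →ₗ[K] K} (hf : f ≠ 0) :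
    IsCoatom (LinearMap.ker f) := by
  apply LinearMap.isCoatom_ker_of_surjective
  intro x
  obtain ⟨v, hv⟩ : ∃ v, f v ≠ 0 := by
    by_contra h
    push_neg at h
    exact hf (by ext v; simp [h v])
  exact ⟨(x * (f v)⁻¹) • v, by rw [map_smul, smul_eq_mul, mul_assoc, inv_mul_cancel₀ hv, mul_one]⟩

lemma coatom_finrank {H : Submodule K V} (hH : IsCoatom H) :
    finrank K V ≤ finrank K H + 1 := by
  obtain ⟨v, hv⟩ : ∃ v, v ∉ H := by
    by_contra h
    push_neg at h
    exact hH.1 (eq_top_iff.2 fun x _ => h x)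
  have hne : v ≠ 0 := fun h => hv (h ▸ H.zero_mem)
  have hsup : H ⊔ (K ∙ v) = ⊤ := by
    apply hH.2
    refine lt_of_le_of_ne le_sup_left fun h => hv ?_
    rw [h]
    exact le_sup_right (α := Submodule K V) (Submodule.mem_span_singleton_self v)
  have h1 := Submodule.finrank_sup_add_finrank_inf_eq H (K ∙ v)
  have h2 : finrank K ↥(H ⊔ (K ∙ v)) = finrank K V := by rw [hsup, finrank_top]
  have h3 : finrank K ↥(K ∙ v) = 1 := finrank_span_singleton hne
  omega

lemma codim_inf_coatom_le (X H : Submodule K V) (hH : IsCoatom H) :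
    finrank K (V ⧸ (X ⊓ H)) ≤ finrank K (V ⧸ X) + 1 := by
  by_cases hXH : X ≤ H
  · rw [inf_eq_left.2 hXH]; omega
  · have hsup : X ⊔ H = ⊤ := by
      apply hH.2
      refine lt_of_le_of_ne le_sup_right fun h => hXH ?_
      rw [h]; exact le_sup_left
    have h1 := Submodule.finrank_sup_add_finrank_inf_eq X H
    rw [hsup, finrank_top] at h1
    have h2 := coatom_finrank hH
    have h3 := codim_add_finrank X
    have h4 := codim_add_finrank (X ⊓ H)
    have h5 := Submodule.finrank_mono (le_top : H ≤ ⊤)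
    rw [finrank_top] at h5
    omega

lemma codim_ker_eq_finrank_range {W : Type*} [AddCommGroup W] [Module K W]
    (f : V →ₗ[K] W) :
    finrank K (V ⧸ LinearMap.ker f) = finrank K (LinearMap.range f) :=
  LinearEquiv.finrank_eq f.quotKerEquivRange

lemma factor_pair {f g h : V →ₗ[K] K} (hsurj : Function.Surjective (f.prod g))
    (hker : LinearMap.ker f ⊓ LinearMap.ker g ≤ LinearMap.ker h) :
    ∃ a b : K, h = a • f + b • g := by
  obtain ⟨inv, hinv⟩ := (f.prod g).exists_rightInverse_of_surjective
    (LinearMap.range_eq_top.2 hsurj)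
  refine ⟨h (inv (1, 0)), h (inv (0, 1)), ?_⟩
  ext v
  have hv : h (inv ((f.prod g) v)) = h v := by
    have hm : inv ((f.prod g) v) - v ∈ LinearMap.ker h := by
      apply hker
      rw [← LinearMap.ker_prod]
      have := LinearMap.ext_iff.1 hinv ((f.prod g) v)
      simp only [LinearMap.coe_comp, Function.comp_apply, LinearMap.id_apply] at this
      rw [LinearMap.mem_ker, map_sub, sub_eq_zero, this]
    have := (LinearMap.mem_ker.1 hm)
    rw [map_sub, sub_eq_zero] at this
    exact this
  have hdecomp : ((f.prod g) v : K × K) = (f v) • ((1 : K), (0 : K)) + (g v) • ((0:K), (1:K)) := by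
    simp [LinearMap.prod_apply, Prod.ext_iff]
  rw [← hv, hdecomp, map_add, map_smul, map_smul]
  simp [mul_comm]

end LinAlg

section LatSec
variable {K V : Type*} [Field K] [AddCommGroup V] [Module K V]

lemma top_mem_lat (A : Set (Submodule K V)) : ⊤ ∈ lat A :=
  ⟨∅, by simp, by simp⟩

lemma subset_lat (A : Set (Submodule K V)) : A ⊆ lat A :=
  fun H hH => ⟨{H}, by simpa, by simp⟩

lemma sInf_mem_lat {A B : Set (Submodule K V)} (h : B ⊆ A) : sInf B ∈ lat A :=
  ⟨B, h, rfl⟩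

lemma mem_of_latCoatom {A : Set (Submodule K V)} (hA : ∀ H ∈ A, IsCoatom H)
    {X : Submodule K V} (hX : X ∈ lat A) (hXne : X ≠ ⊤)
    (hmax : ∀ Y ∈ lat A, X < Y → Y = ⊤) : X ∈ A := by
  obtain ⟨B, hBA, rfl⟩ := hX
  obtain ⟨H, hHB⟩ : B.Nonempty := by
    rcases B.eq_empty_or_nonempty with h | h
    · exact absurd (by simp [h]) hXne
    · exact h
  have hle : sInf B ≤ H := sInf_le hHB
  rcases eq_or_lt_of_le hle with h | h
  · exact h ▸ hBA hHB
  · exact absurd (hmax H (subset_lat A (hBA hHB)) h) (hA H (hBA hHB)).1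

lemma exists_flat_of_codim [FiniteDimensional K V] {A : Set (Submodule K V)}
    (hA : IsCentralArr A) {X : Submodule K V} (hX : X ∈ lat A) :
    ∀ k ≤ finrank K (V ⧸ X), ∃ Y ∈ lat A, X ≤ Y ∧ finrank K (V ⧸ Y) = k := by
  obtain ⟨B, hBA, rfl⟩ := hX
  have hBfin : B.Finite := hA.1.subset hBA
  obtain ⟨s, rfl⟩ : ∃ s : Finset (Submodule K V), ↑s = B := ⟨hBfin.toFinset, hBfin.coe_toFinset⟩
  clear hBfin
  classical
  induction s using Finset.induction_on with
  | empty =>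
    intro k hk
    have htop : sInf ((∅ : Finset (Submodule K V)) : Set (Submodule K V)) = ⊤ := by simp
    have h0 : finrank K (V ⧸ (⊤ : Submodule K V)) = 0 := by
      have := codim_add_finrank (⊤ : Submodule K V)
      rw [finrank_top] at this
      omega
    rw [htop, h0] at hk
    have hk0 : k = 0 := by omega
    subst hk0
    exact ⟨⊤, top_mem_lat A, le_top, h0⟩
  | @insert H s hHs ih =>
    intro k hk
    have hBA' : (↑s : Set (Submodule K V)) ⊆ A :=
      fun x hx => hBA (by simpa using Or.inr hx)
    have hHA : H ∈ A := hBA (by simp)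
    have hins : sInf (↑(insert H s) : Set (Submodule K V)) = sInf (↑s) ⊓ H := by
      simp [Finset.coe_insert, sInf_insert, inf_comm]
    by_cases hks : k ≤ finrank K (V ⧸ sInf (↑s : Set (Submodule K V)))
    · obtain ⟨Y, hY, hle, hcodim⟩ := ih hBA' k hks
      exact ⟨Y, hY, le_trans (by rw [hins]; exact inf_le_left) hle, hcodim⟩
    · refine ⟨sInf (↑(insert H s) : Set (Submodule K V)), sInf_mem_lat hBA, le_rfl, ?_⟩
      have h1 : finrank K (V ⧸ sInf (↑(insert H s) : Set (Submodule K V))) ≤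
          finrank K (V ⧸ sInf (↑s : Set (Submodule K V))) + 1 := by
        rw [hins]
        exact codim_inf_coatom_le _ _ (hA.2 H hHA)
      omega
end LatSec

section Transfer
variable {K V K' V' : Type*} [Field K] [AddCommGroup V] [Module K V]
  [Field K'] [AddCommGroup V'] [Module K' V']
  [FiniteDimensional K V] [FiniteDimensional K' V']

lemma codim_le_orderIso {A : Set (Submodule K V)} {B : Set (Submodule K' V')}
    (hA : IsCentralArr A) (e : ↥(lat A) ≃o ↥(lat B)) (x : ↥(lat A)) :
    finrank K (V ⧸ x.1) ≤ finrank K' (V' ⧸ (e x).1) := by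
  suffices h : ∀ k, ∀ x : ↥(lat A), finrank K (V ⧸ x.1) = k →
      k ≤ finrank K' (V' ⧸ (e x).1) from h _ x rfl
  intro k
  induction k using Nat.strong_induction_on with
  | _ k ih =>
    intro x hx
    rcases Nat.eq_zero_or_pos k with rfl | hk
    · exact Nat.zero_le _
    · obtain ⟨Y, hY, hle, hcodim⟩ := exists_flat_of_codim hA x.2 (k - 1) (by omega)
      have hlt : x < (⟨Y, hY⟩ : ↥(lat A)) := by
        refine lt_of_le_of_ne (Subtype.mk_le_mk.2 hle) fun h => ?_
        rw [Subtype.ext_iff] at h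
        simp only at h
        rw [h, hcodim] at hx
        omega
      have hlt' : (e x).1 < (e ⟨Y, hY⟩).1 := e.strictMono hlt
      have h1 := codim_lt_of_lt hlt'
      have h2 := ih (k - 1) (by omega) ⟨Y, hY⟩ hcodim
      omega

lemma codim_orderIso_eq {A : Set (Submodule K V)} {B : Set (Submodule K' V')}
    (hA : IsCentralArr A) (hB : IsCentralArr B) (e : ↥(lat A) ≃o ↥(lat B))
    (x : ↥(lat A)) :
    finrank K' (V' ⧸ (e x).1) = finrank K (V ⧸ x.1) := by
  have h1 := codim_le_orderIso hA e x
  have h2 := codim_le_orderIso hB e.symm (e x)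
  rw [e.symm_apply_apply] at h2
  omega
end Transfer

section Graph
variable {n : ℕ} (G : SimpleGraph (Fin n))

lemma walk_avoid (I : Finset (Fin n)) (v : Fin n)
    {x y : ↥(↑I : Set (Fin n))} (p : (G.induce (↑I : Set (Fin n))).Walk x y)
    (hp : ∀ z ∈ p.support, (z : Fin n) ≠ v)
    (hx : (x : Fin n) ∈ I.erase v) (hy : (y : Fin n) ∈ I.erase v) :
    (G.induce (↑(I.erase v) : Set (Fin n))).Reachable ⟨x, by simpa using hx⟩ ⟨y, by simpa using hy⟩ := by
  induction p with
  | nil =>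
    exact SimpleGraph.Reachable.refl _
  | @cons a b c hadj p ih =>
    have hb : (b : Fin n) ∈ I.erase v := by
      refine Finset.mem_erase.2 ⟨hp b (by simp), b.2⟩
    have hadj' : (G.induce (↑(I.erase v) : Set (Fin n))).Adj ⟨a, by simpa using hx⟩ ⟨b, by simpa using hb⟩ := by
      simpa using hadj
    exact (hadj'.reachable).trans (ih (fun z hz => hp z (by simp [hz])) hb hy)

lemma exists_noncut (I : Finset (Fin n))
    (hI : (G.induce (↑I : Set (Fin n))).Connected) (hcard : 2 ≤ I.card) :
    ∃ v ∈ I, (I.erase v).Nonempty ∧ (G.induce (↑(I.erase v) : Set (Fin n))).Connected := by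
  set H := G.induce (↑I : Set (Fin n)) with hH
  have hne : Nonempty ↥(↑I : Set (Fin n)) := hI.nonempty
  obtain ⟨u⟩ := hne
  -- pick a vertex farthest from u
  obtain ⟨v, -, hv⟩ := Finset.exists_max_image (Finset.univ : Finset ↥(↑I : Set (Fin n)))
    (fun z => H.dist u z) ⟨u, by simp⟩
  have hvu : v ≠ u := by
    obtain ⟨w, hw⟩ := Fintype.exists_ne_of_one_lt_card
      (by simp [Finset.coe_sort_coe, Fintype.card_coe]; omega) u
    intro h
    have h1 : 0 < H.dist u w := hI.pos_dist_of_ne (Ne.symm hw)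
    have h2 := hv w (by simp)
    rw [h, (hI.dist_eq_zero_iff).2 rfl] at h2
    omega
  -- every other vertex is reachable from u by a walk avoiding v
  have key : ∀ a : ↥(↑I : Set (Fin n)), a ≠ v →
      ∃ p : H.Walk u a, ∀ z ∈ p.support, z ≠ v := by
    intro a ha
    obtain ⟨p, hp⟩ := hI.exists_walk_length_eq_dist u a
    refine ⟨p, fun z hz h => ?_⟩
    subst h
    have hmem : z ∈ p.support := hz
    have hsplit := p.take_spec hmem
    have hlen : (p.takeUntil z hmem).length + (p.dropUntil z hmem).length = p.length := by
      rw [← SimpleGraph.Walk.length_append, hsplit]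
    have h1 : H.dist u z ≤ (p.takeUntil z hmem).length := SimpleGraph.dist_le _
    have h2 : H.dist z a ≤ (p.dropUntil z hmem).length := SimpleGraph.dist_le _
    have h3 : 0 < H.dist z a := hI.pos_dist_of_ne (fun h => ha h.symm)
    have h4 := hv a (by simp)
    omega
  -- conclude
  refine ⟨v, v.2, ?_, ?_⟩
  · rw [← Finset.card_pos, Finset.card_erase_of_mem v.2]
    omega
  · have hu' : (u : Fin n) ∈ I.erase v :=
      Finset.mem_erase.2 ⟨fun h => hvu (Subtype.ext h.symm), u.2⟩
    rw [SimpleGraph.connected_iff]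
    refine ⟨fun a b => ?_, ⟨⟨u, by simpa using hu'⟩⟩⟩
    have step : ∀ c : ↥(↑(I.erase v) : Set (Fin n)),
        (G.induce (↑(I.erase v) : Set (Fin n))).Reachable ⟨u, by simpa using hu'⟩ c := by
      intro c
      have hc : (c : Fin n) ∈ I.erase v := by simpa using c.2
      have hcI : (c : Fin n) ∈ I := Finset.mem_of_mem_erase hc
      have hcv : (c : Fin n) ≠ v := Finset.ne_of_mem_erase hc
      obtain ⟨p, hp⟩ := key ⟨c, hcI⟩ (fun h => hcv (congrArg Subtype.val h))
      have := walk_avoid G I v p (fun z hz => fun h => (hp z hz) (Subtype.ext h)) hu' hc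
      exact this.trans (by rw [show (⟨(⟨(c : Fin n), hcI⟩ : ↥(↑I : Set (Fin n))), _⟩ :
        ↥(↑(I.erase v) : Set (Fin n))) = c from Subtype.ext rfl])
    exact (step a).symm.trans (step b)
end Graph

section KSide
variable (K : Type*) [Field K] {n : ℕ}

lemma sumForm_apply_single (I : Finset (Fin n)) (j : Fin n) :
    sumForm n K I (Pi.single j 1) = if j ∈ I then 1 else 0 := by
  simp only [sumForm, LinearMap.coe_sum, Finset.sum_apply, LinearMap.proj_apply,
    Pi.single_apply]
  rw [Finset.sum_ite_eq' I j (fun _ => (1 : K))]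

lemma sumForm_ne_zero {I : Finset (Fin n)} (hI : I.Nonempty) : sumForm n K I ≠ 0 := by
  obtain ⟨i, hi⟩ := hI
  intro h
  have := sumForm_apply_single K I i
  rw [h, if_pos hi] at this
  simp only [LinearMap.zero_apply] at this
  exact one_ne_zero this.symm

lemma hypI_coatom {I : Finset (Fin n)} (hI : I.Nonempty) : IsCoatom (hypI n K I) :=
  isCoatom_ker_of_ne_zero (sumForm_ne_zero K hI)

lemma ker_eq_imp_smul {V : Type*} [AddCommGroup V] [Module K V] {f g : V →ₗ[K] K}
    (hf : f ≠ 0) (h : LinearMap.ker f = LinearMap.ker g) :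
    ∃ c : K, g = c • f := by
  obtain ⟨y, hy⟩ : ∃ y, f y ≠ 0 := by
    by_contra hc
    push_neg at hc
    exact hf (by ext v; simp [hc v])
  refine ⟨g y / f y, ?_⟩
  ext v
  have hker : v - (f v / f y) • y ∈ LinearMap.ker f := by
    simp only [LinearMap.mem_ker, map_sub, map_smul, smul_eq_mul]
    field_simp
    simp
  rw [h] at hker
  have := LinearMap.mem_ker.1 hker
  rw [map_sub, map_smul, sub_eq_zero] at this
  rw [this]
  simp only [smul_eq_mul, LinearMap.smul_apply]
  field_simp

lemma hypI_inj {I J : Finset (Fin n)} (hI : I.Nonempty) (hJ : J.Nonempty)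
    (h : hypI n K I = hypI n K J) : I = J := by
  obtain ⟨c, hc⟩ := ker_eq_imp_smul K (sumForm_ne_zero K hI) h
  have heval : ∀ j : Fin n, (if j ∈ J then (1:K) else 0) = c * (if j ∈ I then 1 else 0) := by
    intro j
    have := congrArg (fun f : (Fin n → K) →ₗ[K] K => f (Pi.single j 1)) hc
    simpa [sumForm_apply_single, smul_eq_mul] using this
  have hc1 : c = 1 := by
    obtain ⟨i, hi⟩ := hI
    have := heval i
    rw [if_pos hi, mul_one] at this
    by_cases hij : i ∈ J
    · rw [if_pos hij] at this; exact this.symm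
    · rw [if_neg hij] at this
      obtain ⟨j, hj⟩ := hJ
      have h2 := heval j
      rw [if_pos hj, ← this, zero_mul] at h2
      exact absurd h2 one_ne_zero
  ext j
  have := heval j
  rw [hc1, one_mul] at this
  constructor <;> intro hj
  · by_contra hj2
    rw [if_pos hj, if_neg hj2] at this
    exact one_ne_zero this.symm
  · by_contra hj2
    rw [if_neg hj2, if_pos hj] at this
    exact one_ne_zero this
  
lemma singleton_connSet {G : SimpleGraph (Fin n)} (i : Fin n) : {i} ∈ connSets G := by
  refine ⟨⟨i, Finset.mem_singleton_self i⟩, ?_⟩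
  rw [SimpleGraph.connected_iff]
  refine ⟨fun a b => ?_, ⟨⟨i, by simp⟩⟩⟩
  have : a = b := by
    apply Subtype.ext
    have ha : (a : Fin n) ∈ ({i} : Finset (Fin n)) := by exact_mod_cast a.2
    have hb : (b : Fin n) ∈ ({i} : Finset (Fin n)) := by exact_mod_cast b.2
    rw [Finset.mem_singleton.1 ha, Finset.mem_singleton.1 hb]
  rw [this]

lemma sumForm_erase {I : Finset (Fin n)} {v : Fin n} (hv : v ∈ I) :
    sumForm n K (I.erase v) + sumForm n K {v} = sumForm n K I := by
  simp only [sumForm, Finset.sum_singleton]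
  rw [Finset.sum_erase_add I _ hv]

lemma pair_surjective {I J : Finset (Fin n)} (hd : Disjoint I J)
    (hI : I.Nonempty) (hJ : J.Nonempty) :
    Function.Surjective ((sumForm n K I).prod (sumForm n K J)) := by
  obtain ⟨w, hw⟩ := hI
  obtain ⟨z, hz⟩ := hJ
  intro ⟨a, b⟩
  refine ⟨a • (Pi.single w 1 : Fin n → K) + b • (Pi.single z 1 : Fin n → K), ?_⟩
  have hwJ : w ∉ J := fun h => (Finset.disjoint_left.1 hd hw) h
  have hzI : z ∉ I := fun h => (Finset.disjoint_left.1 hd h) hz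
  simp only [LinearMap.prod_apply, Function.prod, map_add, map_smul, sumForm_apply_single,
    smul_eq_mul, Prod.mk.injEq]
  rw [if_pos hw, if_neg hwJ, if_neg hzI, if_pos hz]
  simp [Prod.ext_iff]

lemma codim_hyp_pair {I J : Finset (Fin n)} (hd : Disjoint I J)
    (hI : I.Nonempty) (hJ : J.Nonempty) :
    finrank K ((Fin n → K) ⧸ (hypI n K I ⊓ hypI n K J)) = 2 := by
  have hker : hypI n K I ⊓ hypI n K J = LinearMap.ker ((sumForm n K I).prod (sumForm n K J)) := by
    rw [LinearMap.ker_prod]; rfl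
  rw [hker, codim_ker_eq_finrank_range]
  rw [LinearMap.range_eq_top.2 (pair_surjective K hd hI hJ)]
  simp [finrank_top]

lemma iInf_hyp_singleton_eq_bot :
    (⨅ i : Fin n, hypI n K {i}) = ⊥ := by
  rw [eq_bot_iff]
  intro v hv
  have : ∀ i, v i = 0 := by
    intro i
    have hmem : v ∈ hypI n K {i} := (Submodule.mem_iInf _).1 hv i
    have : sumForm n K {i} v = 0 := hmem
    simpa [sumForm] using this
  exact funext this

end KSide

lemma connArr_central (K : Type*) [Field K] {n : ℕ} (G : SimpleGraph (Fin n)) :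
    IsCentralArr (connArr K G) := by
  constructor
  · exact (Set.toFinite (connSets G)).image _
  · rintro H ⟨I, hI, rfl⟩
    exact hypI_coatom K hI.1

lemma coatom_le_coatom {K V : Type*} [Field K] [AddCommGroup V] [Module K V]
    {H₁ H₂ : Submodule K V} (h1 : IsCoatom H₁) (h2 : IsCoatom H₂) (h : H₁ ≤ H₂) :
    H₁ = H₂ := by
  rcases h.eq_or_lt with h' | h'
  · exact h'
  · exact absurd (h1.2 _ h') h2.1

theorem main_formal (K : Type) [Field K] (n : ℕ) (G : SimpleGraph (Fin n))
    (K' : Type) [Field K'] (m : ℕ) (B : Set (Submodule K' (Fin m → K')))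
    (hB : IsCentralArr B) (e : ↥(lat B) ≃o ↥(lat (connArr K G))) :
    IsFormal B := by
  classical
  set A := connArr K G with hAdef
  have hAc : IsCentralArr A := connArr_central K G
  have hmemA : ∀ I ∈ connSets G, hypI n K I ∈ lat A := fun I hI => subset_lat A ⟨I, hI, rfl⟩
  have htopB : (⊤ : Submodule K' (Fin m → K')) ∈ lat B := top_mem_lat B
  have htopA : (⊤ : Submodule K (Fin n → K)) ∈ lat A := top_mem_lat A
  have hetop : e ⟨⊤, htopB⟩ = ⟨⊤, htopA⟩ := by
    refine le_antisymm (Subtype.coe_le_coe.1 le_top) ?_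
    have h1 : e.symm ⟨⊤, htopA⟩ ≤ ⟨⊤, htopB⟩ := Subtype.coe_le_coe.1 le_top
    have h2 := e.monotone h1
    rwa [e.apply_symm_apply] at h2
  set σ : (I : Finset (Fin n)) → I ∈ connSets G → Submodule K' (Fin m → K') :=
    fun I hI => (e.symm ⟨hypI n K I, hmemA I hI⟩).1 with hσ
  have hσB : ∀ I (hI : I ∈ connSets G), σ I hI ∈ B := by
    intro I hI
    refine mem_of_latCoatom hB.2 (e.symm ⟨hypI n K I, hmemA I hI⟩).2 ?_ ?_
    · intro h
      have h1 : e.symm ⟨hypI n K I, hmemA I hI⟩ = ⟨⊤, htopB⟩ := Subtype.ext h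
      have h2 := congrArg e h1
      rw [e.apply_symm_apply, hetop] at h2
      exact (hypI_coatom K hI.1).1 (congrArg Subtype.val h2)
    · intro Y hY hlt
      have hlt2 : e.symm ⟨hypI n K I, hmemA I hI⟩ < (⟨Y, hY⟩ : ↥(lat B)) :=
        Subtype.coe_lt_coe.1 hlt
      have hlt3 := e.strictMono hlt2
      rw [e.apply_symm_apply] at hlt3
      have hYtop : (e ⟨Y, hY⟩).1 = ⊤ :=
        (hypI_coatom K hI.1).2 _ (Subtype.coe_lt_coe.2 hlt3)
      have h4 : e ⟨Y, hY⟩ = ⟨⊤, htopA⟩ := Subtype.ext hYtop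
      have h5 := congrArg e.symm h4
      rw [e.symm_apply_apply, ← hetop, e.symm_apply_apply] at h5
      exact congrArg Subtype.val h5
  have hσinj : ∀ I hI J hJ, σ I hI = σ J hJ → I = J := by
    intro I hI J hJ h
    exact hypI_inj K hI.1 hJ.1 (congrArg Subtype.val (e.symm.injective (Subtype.ext h)))
  have hBσ : ∀ H ∈ B, ∃ I, ∃ hI : I ∈ connSets G, H = σ I hI := by
    intro H hH
    have hHlat : H ∈ lat B := subset_lat B hH
    have hcoatom := hB.2 H hH
    have hEA : (e ⟨H, hHlat⟩).1 ∈ A := by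
      refine mem_of_latCoatom hAc.2 (e ⟨H, hHlat⟩).2 ?_ ?_
      · intro h
        have h1 : e ⟨H, hHlat⟩ = ⟨⊤, htopA⟩ := Subtype.ext h
        have h2 := congrArg e.symm h1
        rw [e.symm_apply_apply, ← hetop, e.symm_apply_apply] at h2
        exact hcoatom.1 (congrArg Subtype.val h2)
      · intro Y hY hlt
        have hlt2 : e ⟨H, hHlat⟩ < (⟨Y, hY⟩ : ↥(lat A)) := Subtype.coe_lt_coe.1 hlt
        have hlt3 := e.symm.strictMono hlt2
        rw [e.symm_apply_apply] at hlt3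
        have hYtop : (e.symm ⟨Y, hY⟩).1 = ⊤ :=
          hcoatom.2 _ (Subtype.coe_lt_coe.2 hlt3)
        have h4 : e.symm ⟨Y, hY⟩ = ⟨⊤, htopB⟩ := Subtype.ext hYtop
        have h5 := congrArg e h4
        rw [e.apply_symm_apply, hetop] at h5
        exact congrArg Subtype.val h5
    obtain ⟨I, hI, hIH⟩ := hEA
    refine ⟨I, hI, ?_⟩
    have h6 : (⟨hypI n K I, hmemA I hI⟩ : ↥(lat A)) = e ⟨H, hHlat⟩ := Subtype.ext hIH
    have h7 := congrArg e.symm h6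
    rw [e.symm_apply_apply] at h7
    exact (congrArg Subtype.val h7).symm
  -- the formality proof proper
  intro α hα c hc hsum
  set Sset := {r : Submodule K' (Fin m → K') →₀ K' | ↑r.support ⊆ B ∧
      (∑ H ∈ r.support, r H • α H) = 0 ∧
      ∃ X ∈ lat B, Module.finrank K' ((Fin m → K') ⧸ X) = 2 ∧
        ∀ H ∈ r.support, X ≤ H} with hSset
  show c ∈ Submodule.span K' Sset
  set L : (Submodule K' (Fin m → K') →₀ K') →ₗ[K'] ((Fin m → K') →ₗ[K'] K') :=
    Finsupp.linearCombination K' α with hLdef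
  have hL : ∀ r : Submodule K' (Fin m → K') →₀ K', L r = ∑ H ∈ r.support, r H • α H := by
    intro r
    rw [hLdef, Finsupp.linearCombination_apply]
    rfl
  have hSker : ∀ r ∈ Sset, L r = 0 := fun r hr => (hL r).trans hr.2.1
  set σ1 : Fin n → Submodule K' (Fin m → K') := fun i => σ {i} (singleton_connSet i) with hσ1
  set U := Finsupp.supported K' K' (Set.range σ1) with hU
  -- independence of the singleton forms
  have hindep : ∀ u : Fin n → K', (∑ i, u i • α (σ1 i)) = 0 → ∀ i, u i = 0 := by
    intro u hu
    set Ψ : (Fin m → K') →ₗ[K'] (Fin n → K') := LinearMap.pi (fun i => α (σ1 i)) with hΨ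
    have hkerΨ : LinearMap.ker Ψ = ⨅ i, σ1 i := by
      rw [hΨ, LinearMap.ker_pi]
      exact iInf_congr fun i => hα _ (hσB {i} (singleton_connSet i))
    have hkermem : LinearMap.ker Ψ ∈ lat B := by
      rw [hkerΨ, ← sInf_range]
      exact sInf_mem_lat (Set.range_subset_iff.2 fun i => hσB {i} (singleton_connSet i))
    have hbot : (e ⟨LinearMap.ker Ψ, hkermem⟩).1 = ⊥ := by
      rw [eq_bot_iff, ← iInf_hyp_singleton_eq_bot (K := K) (n := n)]
      refine le_iInf fun i => ?_
      have h1 : LinearMap.ker Ψ ≤ σ1 i := by rw [hkerΨ]; exact iInf_le _ i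
      have h2 : (⟨LinearMap.ker Ψ, hkermem⟩ : ↥(lat B)) ≤
          e.symm ⟨hypI n K {i}, hmemA _ (singleton_connSet i)⟩ := Subtype.coe_le_coe.1 h1
      have h3 := e.monotone h2
      rw [e.apply_symm_apply] at h3
      exact Subtype.coe_le_coe.2 h3
    have hcod : Module.finrank K' ((Fin m → K') ⧸ LinearMap.ker Ψ) = n := by
      have h0 := codim_orderIso_eq hB hAc e ⟨LinearMap.ker Ψ, hkermem⟩
      rw [hbot] at h0
      have h : Module.finrank K ((Fin n → K) ⧸ (⊥ : Submodule K (Fin n → K))) =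
          Module.finrank K' ((Fin m → K') ⧸ LinearMap.ker Ψ) := h0
      have h2 := codim_add_finrank (⊥ : Submodule K (Fin n → K))
      rw [finrank_bot] at h2
      have h3 : Module.finrank K (Fin n → K) = n := Module.finrank_fin_fun K
      omega
    have hsurj : Function.Surjective Ψ := by
      rw [← LinearMap.range_eq_top]
      apply Submodule.eq_top_of_finrank_eq
      rw [← codim_ker_eq_finrank_range, hcod, Module.finrank_fin_fun K']
    intro i
    set φ : (Fin n → K') →ₗ[K'] K' := ∑ j, u j • LinearMap.proj j with hφ
    have hφΨ : ∀ v, φ (Ψ v) = 0 := by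
      intro v
      have h1 : φ (Ψ v) = (∑ j, u j • α (σ1 j)) v := by
        simp [hφ, hΨ, LinearMap.pi_apply]
      rw [h1, hu]
      rfl
    obtain ⟨v, hv⟩ := hsurj (Pi.single i 1)
    have h2 := hφΨ v
    rw [hv] at h2
    have h3 : φ (Pi.single i 1) = u i := by
      simp only [hφ, LinearMap.sum_apply, LinearMap.smul_apply, LinearMap.proj_apply,
        Pi.single_apply, smul_eq_mul, mul_ite, mul_one, mul_zero]
      rw [Finset.sum_ite_eq' Finset.univ i u]
      simp
    rw [h3] at h2
    exact h2
  -- key induction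
  have hkey : ∀ k (I : Finset (Fin n)) (hI : I ∈ connSets G), I.card ≤ k →
      Finsupp.single (σ I hI) (1 : K') ∈ (Submodule.span K' Sset ⊔ U) := by
    intro k
    induction k with
    | zero =>
      intro I hI hle
      have := Finset.card_pos.2 hI.1
      omega
    | succ k ih =>
      intro I hI hle
      by_cases hcard : I.card ≤ 1
      · have hcard1 : I.card = 1 := le_antisymm hcard (Finset.card_pos.2 hI.1)
        obtain ⟨i, rfl⟩ := Finset.card_eq_one.1 hcard1
        apply Submodule.mem_sup_right
        exact Finsupp.single_mem_supported K' 1 ⟨i, rfl⟩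
      · push_neg at hcard
        obtain ⟨v, hvI, hne, hconn⟩ := exists_noncut G I hI.2 hcard
        have hI' : I.erase v ∈ connSets G := ⟨hne, hconn⟩
        have hvC : ({v} : Finset (Fin n)) ∈ connSets G := singleton_connSet v
        have hd : Disjoint (I.erase v) ({v} : Finset (Fin n)) := by
          simp [Finset.disjoint_singleton_right]
        set XA := hypI n K (I.erase v) ⊓ hypI n K {v} with hXAdef
        have hXAmem : XA ∈ lat A := by
          refine ⟨{hypI n K (I.erase v), hypI n K {v}}, ?_, ?_⟩
          · intro x hx
            rcases hx with h | h
            · exact h ▸ ⟨I.erase v, hI', rfl⟩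
            · exact h ▸ ⟨{v}, hvC, rfl⟩
          · rw [sInf_insert, sInf_singleton]
        have hXAcodim : Module.finrank K ((Fin n → K) ⧸ XA) = 2 :=
          codim_hyp_pair K hd hne ⟨v, Finset.mem_singleton_self v⟩
        set X' := (e.symm ⟨XA, hXAmem⟩).1 with hX'def
        have hX'mem : X' ∈ lat B := (e.symm ⟨XA, hXAmem⟩).2
        have hX'codim : Module.finrank K' ((Fin m → K') ⧸ X') = 2 := by
          have h : Module.finrank K' ((Fin m → K') ⧸ X') =
              Module.finrank K ((Fin n → K) ⧸ XA) :=
            codim_orderIso_eq hAc hB e.symm ⟨XA, hXAmem⟩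
          rw [hXAcodim] at h
          exact h
        have htrans : ∀ (J : Finset (Fin n)) (hJ : J ∈ connSets G), XA ≤ hypI n K J →
            X' ≤ σ J hJ := by
          intro J hJ hXAJ
          have h1 : (⟨XA, hXAmem⟩ : ↥(lat A)) ≤ ⟨hypI n K J, hmemA J hJ⟩ :=
            Subtype.coe_le_coe.1 hXAJ
          exact Subtype.coe_le_coe.2 (e.symm.monotone h1)
        have hle1 : X' ≤ σ (I.erase v) hI' := htrans _ hI' inf_le_left
        have hle2 : X' ≤ σ {v} hvC := htrans _ hvC inf_le_right
        have hXA3 : XA ≤ hypI n K I := by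
          intro x hx
          have h1 : sumForm n K (I.erase v) x = 0 := (Submodule.mem_inf.1 hx).1
          have h2 : sumForm n K {v} x = 0 := (Submodule.mem_inf.1 hx).2
          show sumForm n K I x = 0
          rw [← sumForm_erase K hvI]
          simp [h1, h2]
        have hle3 : X' ≤ σ I hI := htrans _ hI hXA3
        have hne12 : σ (I.erase v) hI' ≠ σ {v} hvC := by
          intro h
          have h2 := hσinj _ hI' _ hvC h
          have h3 : v ∈ I.erase v := h2 ▸ Finset.mem_singleton_self v
          simp at h3
        have hM : σ (I.erase v) hI' ⊓ σ {v} hvC = X' := by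
          have hMmem : σ (I.erase v) hI' ⊓ σ {v} hvC ∈ lat B := by
            refine ⟨{σ (I.erase v) hI', σ {v} hvC}, ?_, ?_⟩
            · intro x hx
              rcases hx with h | h
              · exact h ▸ hσB _ hI'
              · exact h ▸ hσB _ hvC
            · rw [sInf_insert, sInf_singleton]
          have hlt1 : σ (I.erase v) hI' ⊓ σ {v} hvC < σ {v} hvC := by
            refine lt_of_le_of_ne inf_le_right fun h => ?_
            have hsub : σ {v} hvC ≤ σ (I.erase v) hI' := by
              rw [← h]; exact inf_le_left
            exact hne12 (coatom_le_coatom (hB.2 _ (hσB _ hvC)) (hB.2 _ (hσB _ hI')) hsub).symm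
          have hlt2 : σ {v} hvC < ⊤ := lt_top_iff_ne_top.2 (hB.2 _ (hσB _ hvC)).1
          have hc0 : Module.finrank K' ((Fin m → K') ⧸ (⊤ : Submodule K' (Fin m → K'))) = 0 := by
            have := codim_add_finrank (⊤ : Submodule K' (Fin m → K'))
            rw [finrank_top] at this
            omega
          have hcv := codim_lt_of_lt hlt2
          have hcM := codim_lt_of_lt hlt1
          have hcle : Module.finrank K' ((Fin m → K') ⧸ (σ (I.erase v) hI' ⊓ σ {v} hvC)) ≤
              Module.finrank K' ((Fin m → K') ⧸ X') :=
            codim_anti (le_inf hle1 hle2)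
          exact (eq_of_le_of_codim_eq (le_inf hle1 hle2) (by omega)).symm
        have hkerf : LinearMap.ker (α (σ (I.erase v) hI')) = σ (I.erase v) hI' := hα _ (hσB _ hI')
        have hkerg : LinearMap.ker (α (σ {v} hvC)) = σ {v} hvC := hα _ (hσB _ hvC)
        have hkerh : LinearMap.ker (α (σ I hI)) = σ I hI := hα _ (hσB _ hI)
        have hkerfg : LinearMap.ker ((α (σ (I.erase v) hI')).prod (α (σ {v} hvC))) = X' := by
          rw [LinearMap.ker_prod, hkerf, hkerg, hM]
        have hsurjfg : Function.Surjective ((α (σ (I.erase v) hI')).prod (α (σ {v} hvC))) := by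
          rw [← LinearMap.range_eq_top]
          apply Submodule.eq_top_of_finrank_eq
          rw [← codim_ker_eq_finrank_range, hkerfg, hX'codim]
          simp [Module.finrank_prod]
        obtain ⟨a, b, hab⟩ := factor_pair (h := α (σ I hI)) hsurjfg
          (by rw [hkerf, hkerg, hM, hkerh]; exact hle3)
        set r : Submodule K' (Fin m → K') →₀ K' :=
          Finsupp.single (σ (I.erase v) hI') a + Finsupp.single (σ {v} hvC) b
            - Finsupp.single (σ I hI) 1 with hrdef
        have hrsupp : (r.support : Set (Submodule K' (Fin m → K'))) ⊆
            {σ (I.erase v) hI', σ {v} hvC, σ I hI} := by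
          intro H hH
          simp only [Finset.mem_coe, Finsupp.mem_support_iff] at hH
          by_contra hnot
          simp only [Set.mem_insert_iff, Set.mem_singleton_iff, not_or] at hnot
          apply hH
          rw [hrdef, Finsupp.sub_apply, Finsupp.add_apply,
            Finsupp.single_apply, Finsupp.single_apply, Finsupp.single_apply,
            if_neg (fun h => hnot.1 h.symm), if_neg (fun h => hnot.2.1 h.symm),
            if_neg (fun h => hnot.2.2 h.symm)]
          ring
        have hLr : L r = 0 := by
          have h1 : L (Finsupp.single (σ (I.erase v) hI') a) = a • α (σ (I.erase v) hI') := by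
            rw [hLdef, Finsupp.linearCombination_single]
          have h2 : L (Finsupp.single (σ {v} hvC) b) = b • α (σ {v} hvC) := by
            rw [hLdef, Finsupp.linearCombination_single]
          have h3 : L (Finsupp.single (σ I hI) (1:K')) = α (σ I hI) := by
            rw [hLdef, Finsupp.linearCombination_single, one_smul]
          rw [hrdef, map_sub, map_add, h1, h2, h3, hab]
          exact sub_self _
        have hrS : r ∈ Sset := by
          refine ⟨?_, (hL r).symm.trans hLr, X', hX'mem, hX'codim, ?_⟩
          · refine hrsupp.trans ?_
            intro x hx
            rcases hx with h | h | h
            · exact h ▸ hσB _ hI'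
            · exact h ▸ hσB _ hvC
            · exact h ▸ hσB _ hI
          · intro H hH
            rcases hrsupp hH with h | h | h
            · exact h ▸ hle1
            · exact h ▸ hle2
            · exact h ▸ hle3
        have hsingle : Finsupp.single (σ I hI) (1:K') =
            Finsupp.single (σ (I.erase v) hI') a + Finsupp.single (σ {v} hvC) b - r := by
          rw [hrdef]
          abel
        rw [hsingle]
        have hcarderase : (I.erase v).card ≤ k := by
          rw [Finset.card_erase_of_mem hvI]
          omega
        have h1 := ih (I.erase v) hI' hcarderase
        have h2 : Finsupp.single (σ {v} hvC) (1:K') ∈ Submodule.span K' Sset ⊔ U :=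
          Submodule.mem_sup_right (Finsupp.single_mem_supported K' 1 ⟨v, rfl⟩)
        have h1' : Finsupp.single (σ (I.erase v) hI') a ∈ Submodule.span K' Sset ⊔ U := by
          have : Finsupp.single (σ (I.erase v) hI') a
              = a • Finsupp.single (σ (I.erase v) hI') (1:K') := by
            rw [Finsupp.smul_single, smul_eq_mul, mul_one]
          rw [this]
          exact Submodule.smul_mem _ a h1
        have h2' : Finsupp.single (σ {v} hvC) b ∈ Submodule.span K' Sset ⊔ U := by
          have : Finsupp.single (σ {v} hvC) b = b • Finsupp.single (σ {v} hvC) (1:K') := by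
            rw [Finsupp.smul_single, smul_eq_mul, mul_one]
          rw [this]
          exact Submodule.smul_mem _ b h2
        exact sub_mem (add_mem h1' h2') (Submodule.mem_sup_left (Submodule.subset_span hrS))
  -- decompose c
  have hc2 : c ∈ Submodule.span K' Sset ⊔ U := by
    have hcsum : c = ∑ H ∈ c.support, Finsupp.single H (c H) := by
      conv_lhs => rw [← Finsupp.sum_single c]
      rfl
    rw [hcsum]
    refine Submodule.sum_mem _ fun H hH => ?_
    obtain ⟨I, hI, rfl⟩ := hBσ H (hc hH)
    have h1 := hkey I.card I hI le_rfl
    have h2 : Finsupp.single (σ I hI) (c (σ I hI)) =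
        (c (σ I hI)) • Finsupp.single (σ I hI) (1:K') := by
      rw [Finsupp.smul_single, smul_eq_mul, mul_one]
    rw [h2]
    exact Submodule.smul_mem _ _ h1
  obtain ⟨t, ht, u, hu, htu⟩ := Submodule.mem_sup.1 hc2
  have hLt : L t = 0 :=
    Submodule.span_le.2 (fun r hr => LinearMap.mem_ker.2 (hSker r hr)) ht
  have hLu : L u = 0 := by
    have hLc : L c = 0 := (hL c).trans hsum
    rw [← htu, map_add, hLt, zero_add] at hLc
    exact hLc
  have hu0 : u = 0 := by
    have hsupp := (Finsupp.mem_supported _ u).1 hu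
    have hinj : Function.Injective σ1 := by
      intro i j h
      have h2 := hσinj {i} (singleton_connSet i) {j} (singleton_connSet j) h
      simpa using h2
    have hsub : u.support ⊆ Finset.image σ1 Finset.univ := by
      intro H hH
      obtain ⟨i, hi⟩ := hsupp hH
      exact Finset.mem_image.2 ⟨i, Finset.mem_univ i, hi⟩
    have hstep : ∀ i, u (σ1 i) = 0 := by
      apply hindep
      calc (∑ i, u (σ1 i) • α (σ1 i))
          = ∑ H ∈ Finset.image σ1 Finset.univ, u H • α H := by
            rw [Finset.sum_image (fun i _ j _ h => hinj h)]
        _ = ∑ H ∈ u.support, u H • α H := by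
            refine (Finset.sum_subset hsub fun H _ hH => ?_).symm
            rw [Finsupp.notMem_support_iff.1 hH, zero_smul]
        _ = L u := (hL u).symm
        _ = 0 := hLu
    ext H
    by_cases hH : H ∈ u.support
    · obtain ⟨i, hi⟩ := hsupp hH
      rw [← hi]
      exact hstep i
    · exact Finsupp.notMem_support_iff.1 hH
  rw [← htu, hu0, add_zero]
  exact ht

/-- For any field `K` and connected simple graph `G`, the
arrangement `A_G(K)` is combinatorially formal. -/
theorem connArr_combFormal (K : Type) [Field K] (n : ℕ) (G : SimpleGraph (Fin n))
    (hG : G.Connected) :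
    IsCombFormal (connArr K G) := by
  constructor
  · exact main_formal K n G K n (connArr K G) (connArr_central K G) (OrderIso.refl _)
  · intro K' _ m B hBc hiso
    obtain ⟨e⟩ := hiso
    exact main_formal K n G K' m B hBc e
end

section
/- Let G be a connected simple graph on [n] and let B = {ker(x_i) : i ∈ [n]} ⊆ A_G. Then the line-closure of B in A_G equals A_G, i.e. lc(B) = A_G; since |B| = n = rank(A_G), B is an lc-basis of A_G. -/
open Submodule

section ConnArrLCAux

open SimpleGraph

private lemma mem_hypI' {n : ℕ} {I : Finset (Fin n)} {x : Fin n → ℚ} :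
    x ∈ hypI n ℚ I ↔ ∑ i ∈ I, x i = 0 := by
  simp [hypI, sumForm, LinearMap.mem_ker, LinearMap.sum_apply, LinearMap.proj_apply]

private lemma singleton_mem_connSets {n : ℕ} (G : SimpleGraph (Fin n)) (i : Fin n) :
    ({i} : Finset (Fin n)) ∈ connSets G := by
  refine ⟨Finset.singleton_nonempty i, ?_⟩
  rw [Finset.coe_singleton]
  haveI : Nonempty ↥({i} : Set (Fin n)) := ⟨⟨i, rfl⟩⟩
  exact ⟨fun a b => by rw [Subsingleton.elim a b]⟩

private lemma singleton_mem_connArr {n : ℕ} (G : SimpleGraph (Fin n)) (i : Fin n) :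
    hypI n ℚ {i} ∈ connArr ℚ G :=
  ⟨{i}, singleton_mem_connSets G i, rfl⟩

private def homVal {n : ℕ} (G : SimpleGraph (Fin n)) (I : Finset (Fin n)) :
    G.induce (↑I : Set (Fin n)) →g G :=
  ⟨Subtype.val, fun h => h⟩

/-- The support of a walk in the induced subgraph, as a finset of `Fin n`. -/
private def wsupp {n : ℕ} {G : SimpleGraph (Fin n)} {I : Finset (Fin n)}
    {u v : ↥(↑I : Set (Fin n))} (p : (G.induce (↑I : Set (Fin n))).Walk u v) :
    Finset (Fin n) :=
  (p.support.map Subtype.val).toFinset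

private lemma mem_wsupp {n : ℕ} {G : SimpleGraph (Fin n)} {I : Finset (Fin n)}
    {u v : ↥(↑I : Set (Fin n))} {p : (G.induce (↑I : Set (Fin n))).Walk u v}
    {x : Fin n} : x ∈ wsupp p ↔ ∃ a ∈ p.support, (a : Fin n) = x := by
  simp only [wsupp, List.mem_toFinset, List.mem_map]

private lemma wsupp_mem_connSets {n : ℕ} {G : SimpleGraph (Fin n)} {I : Finset (Fin n)}
    {u v : ↥(↑I : Set (Fin n))} (p : (G.induce (↑I : Set (Fin n))).Walk u v) :
    wsupp p ∈ connSets G := by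
  constructor
  · exact ⟨u.1, mem_wsupp.2 ⟨u, p.start_mem_support, rfl⟩⟩
  · have h := (p.map (homVal G I)).connected_induce_support
    have hset : {w | w ∈ (p.map (homVal G I)).support} = (↑(wsupp p) : Set (Fin n)) := by
      ext x
      constructor
      · intro hx
        rw [Set.mem_setOf_eq, SimpleGraph.Walk.support_map] at hx
        obtain ⟨a, ha, rfl⟩ := List.mem_map.1 hx
        exact Finset.mem_coe.2 (mem_wsupp.2 ⟨a, ha, rfl⟩)
      · intro hx
        obtain ⟨a, ha, rfl⟩ := mem_wsupp.1 (Finset.mem_coe.1 hx)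
        rw [Set.mem_setOf_eq, SimpleGraph.Walk.support_map]
        exact List.mem_map.2 ⟨a, ha, rfl⟩
    rwa [hset] at h

private lemma wsupp_cons {n : ℕ} {G : SimpleGraph (Fin n)} {I : Finset (Fin n)}
    {u w v : ↥(↑I : Set (Fin n))} (h : (G.induce (↑I : Set (Fin n))).Adj u w)
    (q : (G.induce (↑I : Set (Fin n))).Walk w v) :
    wsupp (SimpleGraph.Walk.cons h q) = insert (u : Fin n) (wsupp q) := by
  simp [wsupp, SimpleGraph.Walk.support_cons]

private lemma walk_mem_C {n : ℕ} {G : SimpleGraph (Fin n)}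
    {C : Set (Submodule ℚ (Fin n → ℚ))}
    (hB : ∀ i : Fin n, hypI n ℚ {i} ∈ C)
    (hlc : IsLineClosed (connArr ℚ G) C) {I : Finset (Fin n)}
    {u v : ↥(↑I : Set (Fin n))} (p : (G.induce (↑I : Set (Fin n))).Walk u v) :
    hypI n ℚ (wsupp p) ∈ C := by
  induction p with
  | nil => simpa [wsupp] using hB _
  | @cons u w v h q ih =>
    rw [wsupp_cons h q]
    by_cases hu : (u : Fin n) ∈ wsupp q
    · rwa [Finset.insert_eq_self.2 hu]
    · refine hlc _ ih _ (hB (u : Fin n)) ⟨?_, ?_⟩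
      · refine ⟨insert (u : Fin n) (wsupp q), ?_, rfl⟩
        have := wsupp_mem_connSets (SimpleGraph.Walk.cons h q)
        rwa [wsupp_cons h q] at this
      · intro x hx
        rw [Submodule.mem_inf] at hx
        have h1 := mem_hypI'.1 hx.1
        have h2 := mem_hypI'.1 hx.2
        rw [Finset.sum_singleton] at h2
        refine mem_hypI'.2 ?_
        rw [Finset.sum_insert hu, h1, h2, add_zero]

private lemma exists_cover {V : Type*} {G : SimpleGraph V} (hc : G.Connected) (u : V) :
    ∀ l : List V, ∃ p : G.Walk u u, ∀ v ∈ l, v ∈ p.support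
  | [] => ⟨SimpleGraph.Walk.nil, by simp⟩
  | a :: l => by
    obtain ⟨p, hp⟩ := exists_cover hc u l
    obtain ⟨q⟩ := hc.preconnected u a
    refine ⟨(q.append q.reverse).append p, ?_⟩
    intro v hv
    rcases List.mem_cons.1 hv with rfl | hv
    · rw [SimpleGraph.Walk.mem_support_append_iff]
      exact Or.inl (by
        rw [SimpleGraph.Walk.mem_support_append_iff]
        exact Or.inl q.end_mem_support)
    · rw [SimpleGraph.Walk.mem_support_append_iff]
      exact Or.inr (hp v hv)

end ConnArrLCAux

/-- For a connected simple graph `G` on `[n]` and the Boolean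
subarrangement `B = {ker x_i : i ∈ [n]}` of `A_G`, the line closure of `B` in
`A_G` is all of `A_G`; since `|B| = n = rank A_G`, `B` is an lc-basis of `A_G`. -/
theorem connArr_lineClosure (n : ℕ) (G : SimpleGraph (Fin n)) (hG : G.Connected) :
    lineClosure (connArr ℚ G) (Set.range fun i : Fin n => hypI n ℚ {i}) =
      connArr ℚ G ∧
    (Set.range fun i : Fin n => hypI n ℚ {i}).ncard = n ∧
    sInf (connArr ℚ G) = ⊥ := by
  have hBA : (Set.range fun i : Fin n => hypI n ℚ {i}) ⊆ connArr ℚ G := by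
    rintro _ ⟨i, rfl⟩
    exact singleton_mem_connArr G i
  refine ⟨?_, ?_, ?_⟩
  · apply Set.Subset.antisymm
    · exact Set.sInter_subset_of_mem ⟨hBA, Set.Subset.rfl, fun H _ H' _ H'' hH'' => hH''.1⟩
    · refine Set.subset_sInter ?_
      rintro C ⟨hBC, _, hlc⟩
      rintro _ ⟨I, hI, rfl⟩
      haveI : Fintype ↥(↑I : Set (Fin n)) := FinsetCoe.fintype I
      obtain ⟨i0, hi0⟩ := hI.1
      obtain ⟨p, hp⟩ := exists_cover hI.2 (⟨i0, hi0⟩ : ↥(↑I : Set (Fin n)))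
        (Finset.univ : Finset ↥(↑I : Set (Fin n))).toList
      have hsupp : wsupp p = I := by
        ext x
        constructor
        · intro hx
          obtain ⟨a, _, rfl⟩ := mem_wsupp.1 hx
          exact a.2
        · intro hx
          exact mem_wsupp.2 ⟨⟨x, hx⟩,
            hp ⟨x, hx⟩ (Finset.mem_toList.2 (Finset.mem_univ _)), rfl⟩
      rw [← hsupp]
      exact walk_mem_C (fun i => hBC ⟨i, rfl⟩) hlc p
  · have hinj : Function.Injective (fun i : Fin n => hypI n ℚ ({i} : Finset (Fin n))) := by
      intro i j h
      by_contra hne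
      have h1 : Pi.single i (1 : ℚ) ∈ hypI n ℚ {j} :=
        mem_hypI'.2 (by rw [Finset.sum_singleton, Pi.single_eq_of_ne (Ne.symm hne)])
      have h' : hypI n ℚ {i} = hypI n ℚ {j} := h
      rw [← h'] at h1
      have h2 := mem_hypI'.1 h1
      rw [Finset.sum_singleton, Pi.single_eq_same] at h2
      exact one_ne_zero h2
    rw [← Set.image_univ, Set.ncard_image_of_injective _ hinj, Set.ncard_univ,
      Nat.card_eq_fintype_card, Fintype.card_fin]
  · refine eq_bot_iff.2 ?_
    intro x hx
    rw [Submodule.mem_bot]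
    funext i
    have hxi := Submodule.mem_sInf.1 hx (hypI n ℚ {i}) (singleton_mem_connArr G i)
    have := mem_hypI'.1 hxi
    rwa [Finset.sum_singleton] at this
end
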